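/- arXiv:2302.11804 — 12 statements merged into one kernel-verified Lean document; each statement's English description precedes it below -/
import Mathlib

section
/- For every natural number n and every tuple x : Fin n → ℝ with all entries nonnegative, the sum over all subsets A of Fin n with |A| ≥ 2 of the product ∏_{i∈A} x_i is at most (min over j of the sum of x_i over i ≠ j) times (∑_i x_i) times exp(∑_i x_i). -/
open Finset

lemma aux_exp_sub_one_le (u : ℝ) : Real.exp u - 1 ≤ u * Real.exp u := by
  have h1 : -u + 1 ≤ Real.exp (-u) := Real.add_one_le_exp (-u)
  have h2 : Real.exp (-u) * Real.exp u = 1 := by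
    rw [← Real.exp_add]; simp
  nlinarith [Real.exp_pos u]

lemma aux_key (a T P : ℝ) (ha : 0 ≤ a) (hT : 0 ≤ T) (hP : P ≤ Real.exp T) :
    (1 + a) * P - 1 - (a + T) ≤ T * (a + T) * Real.exp (a + T) := by
  have step1 : (1 + a) * P - 1 - (a + T) ≤ (1 + a) * (Real.exp T - 1) - T := by
    nlinarith
  have step2 : Real.exp T - 1 ≤ T * Real.exp T := aux_exp_sub_one_le T
  have step3 : (1 + a) * Real.exp T ≤ Real.exp (a + T) := by
    have h1 : a + 1 ≤ Real.exp a := Real.add_one_le_exp a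
    have h2 : Real.exp a * Real.exp T = Real.exp (a + T) := (Real.exp_add a T).symm
    nlinarith [Real.exp_pos T]
  have step4 : Real.exp (a + T) - 1 ≤ (a + T) * Real.exp (a + T) :=
    aux_exp_sub_one_le (a + T)
  nlinarith [Real.exp_pos T, Real.exp_pos (a + T)]

/-- For every `n : ℕ` and every `x : Fin n → ℝ` with all entries nonnegative,
`∑_{A ⊆ [n], |A| ≥ 2} ∏_{i∈A} x_i ≤ (min_j ∑_{i≠j} x_i) · (∑_i x_i) · e^{∑_i x_i}`. -/
theorem sum_prod_subsets_card_ge_two_le (n : ℕ) (x : Fin n → ℝ) (hx : ∀ i, 0 ≤ x i) :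
    ∑ A ∈ Finset.univ.filter (fun A : Finset (Fin n) => 2 ≤ A.card), ∏ i ∈ A, x i ≤
      (⨅ j : Fin n, ∑ i ∈ Finset.univ.erase j, x i) * (∑ i, x i) * Real.exp (∑ i, x i) := by
  rcases Nat.eq_zero_or_pos n with h0 | hn
  · subst h0
    have h1 : (Finset.univ.filter (fun A : Finset (Fin 0) => 2 ≤ A.card)) = ∅ := by
      decide
    rw [h1, Finset.sum_empty]
    have h2 : (⨅ j : Fin 0, ∑ i ∈ Finset.univ.erase j, x i) = 0 := Real.iInf_of_isEmpty _
    rw [h2]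
    simp
  · have hne : Nonempty (Fin n) := ⟨⟨0, hn⟩⟩
    obtain ⟨j, -, hj⟩ := Finset.exists_min_image Finset.univ
      (fun j => ∑ i ∈ Finset.univ.erase j, x i) Finset.univ_nonempty
    have hinf : (⨅ j : Fin n, ∑ i ∈ Finset.univ.erase j, x i)
        = ∑ i ∈ Finset.univ.erase j, x i :=
      le_antisymm (ciInf_le (Finite.bddBelow_range _) j)
        (le_ciInf fun k => hj k (Finset.mem_univ k))
    rw [hinf]
    set T := ∑ i ∈ Finset.univ.erase j, x i with hTdef
    set a := x j with hadef
    have hS : (∑ i, x i) = a + T := (Finset.add_sum_erase Finset.univ x (Finset.mem_univ j)).symm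
    -- identity: sum over all subsets = product of (x i + 1)
    have hall : (∑ A : Finset (Fin n), ∏ i ∈ A, x i) = ∏ i, (x i + 1) := by
      rw [Fintype.prod_add]
      simp
    -- sum over small sets
    have hsmall_set : (Finset.univ.filter (fun A : Finset (Fin n) => ¬ 2 ≤ A.card))
        = insert (∅ : Finset (Fin n)) (Finset.univ.image fun i => ({i} : Finset (Fin n))) := by
      ext A
      simp only [Finset.mem_filter, Finset.mem_univ, true_and, Finset.mem_insert,
        Finset.mem_image, not_le]
      constructor
      · intro h
        have h2 : A.card = 0 ∨ A.card = 1 := by omega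
        rcases h2 with h' | h'
        · exact Or.inl (Finset.card_eq_zero.mp h')
        · obtain ⟨i, hi⟩ := Finset.card_eq_one.mp h'
          exact Or.inr ⟨i, by simp [hi]⟩
      · rintro (rfl | ⟨i, -, rfl⟩) <;> simp
    have hsmall : (∑ A ∈ Finset.univ.filter (fun A : Finset (Fin n) => ¬ 2 ≤ A.card),
        ∏ i ∈ A, x i) = 1 + ∑ i, x i := by
      have hnm : (∅ : Finset (Fin n)) ∉ Finset.univ.image fun i => ({i} : Finset (Fin n)) := by
        simp only [Finset.mem_image, Finset.mem_univ, true_and, not_exists]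
        exact fun i h => (Finset.singleton_ne_empty i) h
      have hinj : ∀ i ∈ (Finset.univ : Finset (Fin n)), ∀ k ∈ Finset.univ,
          ({i} : Finset (Fin n)) = {k} → i = k := by
        intro i _ k _ h
        exact Finset.singleton_injective h
      rw [hsmall_set, Finset.sum_insert hnm, Finset.sum_image hinj]
      simp
    have hsplit := Finset.sum_filter_add_sum_filter_not Finset.univ
      (fun A : Finset (Fin n) => 2 ≤ A.card) (fun A => ∏ i ∈ A, x i)
    have hLHS : (∑ A ∈ Finset.univ.filter (fun A : Finset (Fin n) => 2 ≤ A.card),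
        ∏ i ∈ A, x i) = (∏ i, (x i + 1)) - 1 - (a + T) := by
      rw [← hS]
      rw [← hall]
      rw [← hsplit, hsmall]
      ring
    rw [hLHS, hS]
    have hprod : (∏ i, (x i + 1)) = (1 + a) * ∏ i ∈ Finset.univ.erase j, (x i + 1) := by
      rw [← Finset.mul_prod_erase Finset.univ _ (Finset.mem_univ j), hadef]
      ring
    have hP : (∏ i ∈ Finset.univ.erase j, (x i + 1)) ≤ Real.exp T := by
      rw [hTdef, Real.exp_sum]
      apply Finset.prod_le_prod
      · intro i _; have := hx i; linarith
      · intro i _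
        have := Real.add_one_le_exp (x i)
        linarith
    have hT0 : 0 ≤ T := Finset.sum_nonneg fun i _ => hx i
    rw [hprod]
    have ha0 : 0 ≤ a := hx j
    have := aux_key a T _ ha0 hT0 hP
    linarith
end

section
/- Let n ∈ ℕ and q : Fin n → [0,1]. Under ℙ let Γ be a random subset of Fin n excluding each i with probability q_i independently of the others, and let Γ̃ be a random subset of Fin n excluding each i with probability (q_1⋯q_n)^{1/n} independently. Then |Γ| is stochastically dominated by |Γ̃|: for all m, ℙ(|Γ| ≤ m) ≥ ℙ(|Γ̃| ≤ m). -/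
open Finset

variable (n m : ℕ)

noncomputable def Fprob (q : Fin n → ℝ) : ℝ :=
  ∑ A ∈ Finset.univ.filter (fun A : Finset (Fin n) => A.card ≤ m),
    (∏ i ∈ A, (1 - q i)) * ∏ i ∈ Aᶜ, q i

noncomputable def fterm (q : Fin n → ℝ) (A : Finset (Fin n)) : ℝ :=
  (if A.card ≤ m then (1:ℝ) else 0) * ((∏ i ∈ A, (1 - q i)) * ∏ i ∈ Aᶜ, q i)

lemma Fprob_eq_sum (q : Fin n → ℝ) :
    Fprob n m q = ∑ A : Finset (Fin n), fterm n m q A := by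
  rw [Fprob, sum_filter]
  refine Finset.sum_congr rfl fun A _ => ?_
  rw [fterm]
  split_ifs <;> simp

lemma decomp (f : Finset (Fin n) → ℝ) (i j : Fin n) (hij : i ≠ j) :
    ∑ A : Finset (Fin n), f A =
      ∑ B ∈ ((univ.erase i).erase j).powerset,
        (f B + f (insert j B) + (f (insert i B) + f (insert i (insert j B)))) := by
  have h1 : insert j ((univ.erase i).erase j) = univ.erase i := by
    rw [insert_erase]
    exact mem_erase.2 ⟨hij.symm, mem_univ j⟩
  have h2 : insert i (univ.erase i) = univ := insert_erase (mem_univ i)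
  have hji : j ∉ (univ.erase i).erase j := notMem_erase _ _
  have hii : i ∉ univ.erase i := notMem_erase _ _
  have step : ∑ A : Finset (Fin n), f A = ∑ A ∈ (univ : Finset (Fin n)).powerset, f A := by
    rw [Finset.powerset_univ]
  rw [step, ← h2, sum_powerset_insert hii, ← h1, sum_powerset_insert hji,
    sum_powerset_insert hji, ← sum_add_distrib]
  rw [h1, h2]
  rw [← Finset.sum_add_distrib, ← Finset.sum_add_distrib]

lemma fterm_vals (q : Fin n → ℝ) (i j : Fin n) (hij : i ≠ j) (B : Finset (Fin n))
    (hiB : i ∉ B) (hjB : j ∉ B) :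
    fterm n m q B =
      (if B.card ≤ m then (1:ℝ) else 0) *
        ((∏ x ∈ B, (1 - q x)) * (q i * (q j * ∏ x ∈ (Bᶜ.erase i).erase j, q x))) ∧
    fterm n m q (insert j B) =
      (if B.card + 1 ≤ m then (1:ℝ) else 0) *
        (((1 - q j) * ∏ x ∈ B, (1 - q x)) * (q i * ∏ x ∈ (Bᶜ.erase i).erase j, q x)) ∧
    fterm n m q (insert i B) =
      (if B.card + 1 ≤ m then (1:ℝ) else 0) *
        (((1 - q i) * ∏ x ∈ B, (1 - q x)) * (q j * ∏ x ∈ (Bᶜ.erase i).erase j, q x)) ∧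
    fterm n m q (insert i (insert j B)) =
      (if B.card + 2 ≤ m then (1:ℝ) else 0) *
        (((1 - q i) * ((1 - q j) * ∏ x ∈ B, (1 - q x))) * ∏ x ∈ (Bᶜ.erase i).erase j, q x) := by
  have hiBc : i ∈ Bᶜ := mem_compl.2 hiB
  have hjBc : j ∈ Bᶜ := mem_compl.2 hjB
  have hjBci : j ∈ Bᶜ.erase i := mem_erase.2 ⟨hij.symm, hjBc⟩
  have hiBcj : i ∈ Bᶜ.erase j := mem_erase.2 ⟨hij, hiBc⟩
  have hijB : i ∉ insert j B := by simp [hij, hiB]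
  have hcomm : (Bᶜ.erase j).erase i = (Bᶜ.erase i).erase j := Finset.erase_right_comm
  refine ⟨?_, ?_, ?_, ?_⟩
  · rw [fterm, ← Finset.mul_prod_erase _ _ hiBc, ← Finset.mul_prod_erase _ _ hjBci]
  · rw [fterm, card_insert_of_notMem hjB, prod_insert hjB, compl_insert,
      ← Finset.mul_prod_erase _ _ hiBcj, hcomm]
  · rw [fterm, card_insert_of_notMem hiB, prod_insert hiB, compl_insert,
      ← Finset.mul_prod_erase _ _ hjBci]
  · rw [fterm, card_insert_of_notMem hijB, card_insert_of_notMem hjB,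
      prod_insert hijB, prod_insert hjB, compl_insert, compl_insert, hcomm]

lemma scalar_ineq (a b a' b' u v c0 c1 c2 : ℝ) (hu : 0 ≤ u) (hv : 0 ≤ v)
    (hab : a' * b' = a * b) (hs : a' + b' ≤ a + b) (hc : c2 ≤ c1) :
    c0 * (u * (a' * (b' * v))) + c1 * (((1 - b') * u) * (a' * v)) +
      (c1 * (((1 - a') * u) * (b' * v)) + c2 * (((1 - a') * ((1 - b') * u)) * v))
    ≤ c0 * (u * (a * (b * v))) + c1 * (((1 - b) * u) * (a * v)) +
      (c1 * (((1 - a) * u) * (b * v)) + c2 * (((1 - a) * ((1 - b) * u)) * v)) := by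
  have hz : a * b - a' * b' = 0 := by rw [hab]; ring
  have key : (c0 * (u * (a * (b * v))) + c1 * (((1 - b) * u) * (a * v)) +
      (c1 * (((1 - a) * u) * (b * v)) + c2 * (((1 - a) * ((1 - b) * u)) * v))) -
      (c0 * (u * (a' * (b' * v))) + c1 * (((1 - b') * u) * (a' * v)) +
      (c1 * (((1 - a') * u) * (b' * v)) + c2 * (((1 - a') * ((1 - b') * u)) * v))) =
      (c1 - c2) * ((a + b - (a' + b')) * (u * v)) +
      ((c0 - 2 * c1 + c2) * (u * v)) * (a * b - a' * b') := by ring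
  have hz2 : ((c0 - 2 * c1 + c2) * (u * v)) * (a * b - a' * b') = 0 := by rw [hz, mul_zero]
  nlinarith [mul_nonneg (mul_nonneg (sub_nonneg.2 hs) (sub_nonneg.2 hc)) (mul_nonneg hu hv), key, hz2]

lemma swap_lemma (q q' : Fin n → ℝ) (i j : Fin n) (hij : i ≠ j)
    (heq : ∀ x, x ≠ i → x ≠ j → q' x = q x)
    (hbound : ∀ x, x ≠ i → x ≠ j → q x ∈ Set.Icc (0:ℝ) 1)
    (hab : q' i * q' j = q i * q j) (hs : q' i + q' j ≤ q i + q j) :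
    Fprob n m q' ≤ Fprob n m q := by
  rw [Fprob_eq_sum, Fprob_eq_sum, decomp n (fterm n m q') i j hij,
    decomp n (fterm n m q) i j hij]
  refine Finset.sum_le_sum fun B hB => ?_
  rw [mem_powerset] at hB
  have hiB' : i ∉ B := fun h => by
    have := hB h
    rw [Finset.erase_right_comm] at this
    exact notMem_erase i _ this
  have hjB : j ∉ B := fun h => notMem_erase j _ (hB h)
  obtain ⟨e1, e2, e3, e4⟩ := fterm_vals n m q i j hij B hiB' hjB
  obtain ⟨e1', e2', e3', e4'⟩ := fterm_vals n m q' i j hij B hiB' hjB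
  have hu : (∏ x ∈ B, (1 - q x)) = ∏ x ∈ B, (1 - q' x) := by
    refine Finset.prod_congr rfl fun x hx => ?_
    have hxi : x ≠ i := fun h => hiB' (h ▸ hx)
    have hxj : x ≠ j := fun h => hjB (h ▸ hx)
    rw [heq x hxi hxj]
  have hv : (∏ x ∈ (Bᶜ.erase i).erase j, q x) = ∏ x ∈ (Bᶜ.erase i).erase j, q' x := by
    refine Finset.prod_congr rfl fun x hx => ?_
    have hxj : x ≠ j := (mem_erase.1 hx).1
    have hxi : x ≠ i := (mem_erase.1 (mem_erase.1 hx).2).1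
    rw [heq x hxi hxj]
  rw [e1, e2, e3, e4, e1', e2', e3', e4', ← hu, ← hv]
  have hunn : 0 ≤ ∏ x ∈ B, (1 - q x) := by
    refine Finset.prod_nonneg fun x hx => ?_
    have hxi : x ≠ i := fun h => hiB' (h ▸ hx)
    have hxj : x ≠ j := fun h => hjB (h ▸ hx)
    have := hbound x hxi hxj
    linarith [this.2]
  have hvnn : 0 ≤ ∏ x ∈ (Bᶜ.erase i).erase j, q x := by
    refine Finset.prod_nonneg fun x hx => ?_
    have hxj : x ≠ j := (mem_erase.1 hx).1
    have hxi : x ≠ i := (mem_erase.1 (mem_erase.1 hx).2).1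
    exact (hbound x hxi hxj).1
  have hc : (if B.card + 2 ≤ m then (1:ℝ) else 0) ≤ (if B.card + 1 ≤ m then (1:ℝ) else 0) := by
    by_cases h1 : B.card + 2 ≤ m
    · rw [if_pos h1, if_pos (by omega : B.card + 1 ≤ m)]
    · rw [if_neg h1]
      split_ifs <;> norm_num
  exact scalar_ineq _ _ _ _ _ _ _ _ _ hunn hvnn hab hs hc

lemma main_aux (g : ℝ) (hg0 : 0 < g) (hg1 : g ≤ 1) :
    ∀ k (q : Fin n → ℝ), (∀ i, q i ∈ Set.Icc (0:ℝ) 1) → (∏ i, q i) = g ^ n →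
      (univ.filter (fun i => q i ≠ g)).card ≤ k → Fprob n m (fun _ => g) ≤ Fprob n m q := by
  intro k
  induction k with
  | zero =>
    intro q hq hprod hcard
    have hall : ∀ i, q i = g := by
      intro i; by_contra h
      have hmem : i ∈ univ.filter (fun i => q i ≠ g) := mem_filter.2 ⟨mem_univ i, h⟩
      have := card_pos.2 ⟨i, hmem⟩; omega
    have : q = fun _ => g := funext hall
    rw [this]
  | succ k ih =>
    intro q hq hprod hcard
    by_cases h0 : (univ.filter (fun i => q i ≠ g)).card = 0
    · have hall : ∀ i, q i = g := by
        intro i; by_contra h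
        have hmem : i ∈ univ.filter (fun i => q i ≠ g) := mem_filter.2 ⟨mem_univ i, h⟩
        have := card_pos.2 ⟨i, hmem⟩; omega
      have : q = fun _ => g := funext hall
      rw [this]
    · obtain ⟨i0, hi0⟩ := card_pos.1 (Nat.pos_of_ne_zero h0)
      have hi0' : q i0 ≠ g := (mem_filter.1 hi0).2
      -- find i with q i < g
      have hex_lt : ∃ i, q i < g := by
        by_contra hno
        push_neg at hno
        have : (∏ x : Fin n, (fun _ => g) x) < ∏ x : Fin n, q x := by
          refine Finset.prod_lt_prod (fun x _ => hg0) (fun x _ => hno x) ⟨i0, mem_univ i0, ?_⟩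
          exact lt_of_le_of_ne (hno i0) (Ne.symm hi0')
        rw [prod_const, card_univ, Fintype.card_fin] at this
        simp only [hprod] at this
        exact lt_irrefl _ this
      have hex_gt : ∃ j, g < q j := by
        by_contra hno
        push_neg at hno
        have : (∏ x : Fin n, q x) < ∏ x : Fin n, (fun _ => g) x := by
          refine Finset.prod_lt_prod (fun x _ => ?_) (fun x _ => hno x) ⟨i0, mem_univ i0, ?_⟩
          · have h1 : 0 < g ^ n := pow_pos hg0 n
            rw [← hprod] at h1
            by_contra hc
            push_neg at hc
            have : (∏ x : Fin n, q x) ≤ 0 := by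
              calc (∏ x : Fin n, q x) = q x * ∏ y ∈ univ.erase x, q y :=
                    (Finset.mul_prod_erase _ _ (mem_univ x)).symm
                _ ≤ 0 := mul_nonpos_of_nonpos_of_nonneg hc
                    (Finset.prod_nonneg fun y _ => (hq y).1)
            linarith
          · exact lt_of_le_of_ne (hno i0) hi0'
        rw [prod_const, card_univ, Fintype.card_fin] at this
        simp only [hprod] at this
        exact lt_irrefl _ this
      obtain ⟨i, hi⟩ := hex_lt
      obtain ⟨j, hj⟩ := hex_gt
      have hij : i ≠ j := fun h => absurd (h ▸ hi) (not_lt.2 (le_of_lt hj))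
      set q' : Fin n → ℝ := Function.update (Function.update q i g) j (q i * q j / g) with hq'def
      have hq'j : q' j = q i * q j / g := Function.update_self _ _ _
      have hq'i : q' i = g := by
        rw [hq'def, Function.update_of_ne hij, Function.update_self]
      have hq'x : ∀ x, x ≠ i → x ≠ j → q' x = q x := fun x hxi hxj => by
        rw [hq'def, Function.update_of_ne hxj, Function.update_of_ne hxi]
      have hgne : g ≠ 0 := ne_of_gt hg0
      -- product preserved
      have hprod' : (∏ x, q' x) = g ^ n := by
        have hje : i ∈ univ.erase j := mem_erase.2 ⟨hij, mem_univ i⟩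
        have e1 : (∏ x, q' x) = (q i * q j / g) * ∏ x ∈ univ \ {j}, Function.update q i g x := by
          rw [hq'def]
          exact Finset.prod_update_of_mem (mem_univ j) (Function.update q i g) (q i * q j / g)
        have e2 : (∏ x ∈ univ \ {j}, Function.update q i g x)
            = g * ∏ x ∈ (univ \ {j}) \ {i}, q x := by
          have hje' : i ∈ univ \ {j} := by rw [← Finset.erase_eq]; exact hje
          exact Finset.prod_update_of_mem hje' q g
        have e3 : (∏ x, q x) = q j * (q i * ∏ x ∈ (univ \ {j}) \ {i}, q x) := by
          rw [← Finset.mul_prod_erase _ _ (mem_univ j), Finset.erase_eq]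
          have hje' : i ∈ univ \ {j} := by rw [← Finset.erase_eq]; exact hje
          rw [← Finset.mul_prod_erase _ _ hje', Finset.erase_eq]
        rw [e1, e2, ← hprod, e3]
        field_simp
      -- bounds
      have hq' : ∀ x, q' x ∈ Set.Icc (0:ℝ) 1 := by
        intro x
        by_cases hxi : x = i
        · rw [hxi, hq'i]; exact ⟨le_of_lt hg0, hg1⟩
        by_cases hxj : x = j
        · rw [hxj, hq'j]
          refine ⟨div_nonneg (mul_nonneg (hq i).1 (hq j).1) hg0.le, ?_⟩
          rw [div_le_one hg0]
          nlinarith [mul_le_mul hi.le (hq j).2 (hq j).1 hg0.le]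
        · rw [hq'x x hxi hxj]; exact hq x
      -- cardinality decreases
      have hcard' : (univ.filter (fun x => q' x ≠ g)).card ≤ k := by
        have hsub : univ.filter (fun x => q' x ≠ g) ⊆ (univ.filter (fun x => q x ≠ g)).erase i := by
          intro x hx
          have hx' : q' x ≠ g := (mem_filter.1 hx).2
          have hxi : x ≠ i := fun h => hx' (h ▸ hq'i)
          refine mem_erase.2 ⟨hxi, mem_filter.2 ⟨mem_univ x, ?_⟩⟩
          by_cases hxj : x = j
          · subst hxj; exact ne_of_gt hj
          · rw [← hq'x x hxi hxj]; exact hx'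
        have himem : i ∈ univ.filter (fun x => q x ≠ g) :=
          mem_filter.2 ⟨mem_univ i, ne_of_lt hi⟩
        have h1 := card_le_card hsub
        rw [card_erase_of_mem himem] at h1
        omega
      have step1 : Fprob n m (fun _ => g) ≤ Fprob n m q' := ih q' hq' hprod' hcard'
      have step2 : Fprob n m q' ≤ Fprob n m q := by
        refine swap_lemma n m q q' i j hij hq'x (fun x hxi hxj => hq x) ?_ ?_
        · rw [hq'i, hq'j]; field_simp
        · rw [hq'i, hq'j]
          have hkey : (0:ℝ) ≤ (g - q i) * (q j - g) :=
            mul_nonneg (sub_nonneg.2 hi.le) (sub_nonneg.2 hj.le)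
          have hd : q i * q j / g * g = q i * q j := div_mul_cancel₀ _ hgne
          nlinarith [hd, hkey, hg0]
      linarith

/-- Stochastic dominance: if `Γ` excludes each `i` with probability `q_i` independently and
`Γ̃` excludes each `i` with the geometric mean probability `(q_1⋯q_n)^{1/n}` independently, then
`ℙ(|Γ| ≤ m) ≥ ℙ(|Γ̃| ≤ m)` for all `m`. -/
theorem card_random_subset_stochastic_dominance (n : ℕ) (hn : 0 < n) (q : Fin n → ℝ)
    (hq : ∀ i, q i ∈ Set.Icc (0 : ℝ) 1) (m : ℕ) :
    ∑ A ∈ Finset.univ.filter (fun A : Finset (Fin n) => A.card ≤ m),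
        (1 - (∏ i, q i) ^ ((1 : ℝ) / n)) ^ A.card *
          ((∏ i, q i) ^ ((1 : ℝ) / n)) ^ (n - A.card)
      ≤ ∑ A ∈ Finset.univ.filter (fun A : Finset (Fin n) => A.card ≤ m),
          (∏ i ∈ A, (1 - q i)) * ∏ i ∈ Aᶜ, q i := by
  have hP0 : 0 ≤ ∏ i, q i := Finset.prod_nonneg fun i _ => (hq i).1
  have hP1 : (∏ i, q i) ≤ 1 :=
    Finset.prod_le_one (fun i _ => (hq i).1) (fun i _ => (hq i).2)
  set g : ℝ := (∏ i, q i) ^ ((1 : ℝ) / n) with hg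
  have key : (∑ A ∈ Finset.univ.filter (fun A : Finset (Fin n) => A.card ≤ m),
      (1 - g) ^ A.card * g ^ (n - A.card)) = Fprob n m (fun _ => g) := by
    rw [Fprob]
    refine Finset.sum_congr rfl fun A _ => ?_
    rw [prod_const, prod_const, card_compl, Fintype.card_fin]
  rcases eq_or_lt_of_le hP0 with h0 | hpos
  · -- product is zero
    have hgz : g = 0 := by
      rw [hg, ← h0, Real.zero_rpow (by positivity)]
    rw [hgz]
    by_cases hnm : n ≤ m
    · have hfilter : Finset.univ.filter (fun A : Finset (Fin n) => A.card ≤ m) = univ := by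
        refine filter_true_of_mem fun A _ => le_trans ?_ hnm
        calc A.card ≤ Fintype.card (Fin n) := Finset.card_le_univ A
          _ = n := Fintype.card_fin n
      rw [hfilter]
      have hR : (∑ A : Finset (Fin n), (∏ i ∈ A, (1 - q i)) * ∏ i ∈ Aᶜ, q i) = 1 := by
        have h1 : (∏ i : Fin n, ((1 - q i) + q i))
            = ∑ A ∈ (univ : Finset (Fin n)).powerset,
                (∏ i ∈ A, (1 - q i)) * ∏ i ∈ univ \ A, q i :=
          Finset.prod_add _ _ _
        rw [Finset.powerset_univ] at h1
        have h2 : (∑ A : Finset (Fin n), (∏ i ∈ A, (1 - q i)) * ∏ i ∈ univ \ A, q i)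
            = ∑ A : Finset (Fin n), (∏ i ∈ A, (1 - q i)) * ∏ i ∈ Aᶜ, q i := by
          refine Finset.sum_congr rfl fun A _ => ?_
          rw [← Finset.compl_eq_univ_sdiff]
        rw [h2] at h1
        rw [← h1]
        simp
      rw [hR]
      have hL : (∑ A : Finset (Fin n), (1 - (0:ℝ)) ^ A.card * (0:ℝ) ^ (n - A.card)) = 1 := by
        rw [Finset.sum_eq_single (univ : Finset (Fin n))]
        · rw [card_univ, Fintype.card_fin]
          simp
        · intro A _ hA
          have hlt : A.card < n := by
            have : A ⊂ univ := Finset.ssubset_univ_iff.2 hA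
            calc A.card < (univ : Finset (Fin n)).card := Finset.card_lt_card this
              _ = n := by rw [card_univ, Fintype.card_fin]
          rw [zero_pow (by omega : n - A.card ≠ 0), mul_zero]
        · intro h
          exact absurd (mem_univ _) h
      rw [hL]
    · -- m < n : left side is zero
      have hL : (∑ A ∈ Finset.univ.filter (fun A : Finset (Fin n) => A.card ≤ m),
          (1 - (0:ℝ)) ^ A.card * (0:ℝ) ^ (n - A.card)) = 0 := by
        refine Finset.sum_eq_zero fun A hA => ?_
        have hc : A.card ≤ m := (mem_filter.1 hA).2
        rw [zero_pow (by omega : n - A.card ≠ 0), mul_zero]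
      rw [hL]
      refine Finset.sum_nonneg fun A _ => ?_
      refine mul_nonneg (Finset.prod_nonneg fun i _ => ?_) (Finset.prod_nonneg fun i _ => (hq i).1)
      linarith [(hq i).2]
  · -- product positive
    have hg0 : 0 < g := Real.rpow_pos_of_pos hpos _
    have hg1 : g ≤ 1 := Real.rpow_le_one hP0 hP1 (by positivity)
    have hgn : (∏ i, q i) = g ^ n := by
      rw [hg, ← Real.rpow_natCast ((∏ i, q i) ^ ((1:ℝ)/n)) n, ← Real.rpow_mul hP0]
      have : (1:ℝ) / n * n = 1 := by
        field_simp
      rw [this, Real.rpow_one]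
    have hcard : (univ.filter (fun i => q i ≠ g)).card ≤ n := by
      calc (univ.filter (fun i => q i ≠ g)).card ≤ (univ : Finset (Fin n)).card :=
            Finset.card_le_card (filter_subset _ _)
        _ = n := by rw [card_univ, Fintype.card_fin]
    have hmain := main_aux n m g hg0 hg1 n q hq hgn hcard
    calc (∑ A ∈ Finset.univ.filter (fun A : Finset (Fin n) => A.card ≤ m),
          (1 - g) ^ A.card * g ^ (n - A.card)) = Fprob n m (fun _ => g) := key
      _ ≤ Fprob n m q := hmain
      _ = _ := rfl
end

section
/- Let ν be a finite atomless complex measure on a countably separated measurable space and (𝒫_n) a dissecting system with max_{P∈𝒫_n} |ν|(P) → 0. Then lim_{n→∞} ∏_{P∈𝒫_n}(1 + ν(P)) = e^{ν(X)}. -/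
open Filter MeasureTheory

lemma vm_sUnion {X : Type*} [MeasurableSpace X] (ν : MeasureTheory.ComplexMeasure X) :
    ∀ s : Finset (Set X), (∀ A ∈ s, MeasurableSet A) →
      ((s : Set (Set X)).Pairwise fun a b => Disjoint a b) →
      ν (⋃₀ (s : Set (Set X))) = ∑ A ∈ s, ν A := by
  intro s
  classical
  induction s using Finset.induction_on with
  | empty => simp
  | @insert a s ha ih =>
    intro hm hd
    have hms : MeasurableSet (⋃₀ (s : Set (Set X))) :=
      MeasurableSet.sUnion s.countable_toSet (fun t ht => hm t (Finset.mem_insert_of_mem ht))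
    have hda : Disjoint a (⋃₀ (s : Set (Set X))) := by
      rw [Set.disjoint_sUnion_right]
      intro t ht
      exact hd (by simp) (by simp [ht]) (fun h => ha (h ▸ ht))
    rw [Finset.coe_insert, Set.sUnion_insert, MeasureTheory.VectorMeasure.of_union hda
        (hm a (Finset.mem_insert_self a s)) hms,
      ih (fun A hA => hm A (Finset.mem_insert_of_mem hA))
        (hd.mono (by simp [Set.subset_insert])), Finset.sum_insert ha]

lemma key_est {ι : Type*} (f : ι → ℂ) :
    ∀ s : Finset ι, (∀ i ∈ s, ‖f i‖ ≤ 1) →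
      ‖(∏ i ∈ s, (1 + f i)) - Complex.exp (∑ i ∈ s, f i)‖ ≤
        (∑ i ∈ s, ‖f i‖ ^ 2) * Real.exp (∑ i ∈ s, ‖f i‖) := by
  intro s
  classical
  induction s using Finset.induction_on with
  | empty => simp
  | @insert a s ha ih =>
    intro h1
    have h1a : ‖f a‖ ≤ 1 := h1 a (Finset.mem_insert_self a s)
    have ihs := ih (fun i hi => h1 i (Finset.mem_insert_of_mem hi))
    rw [Finset.prod_insert ha, Finset.sum_insert ha, Finset.sum_insert ha,
      Finset.sum_insert ha, Complex.exp_add]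
    set A := ∏ i ∈ s, (1 + f i)
    set E := Complex.exp (∑ i ∈ s, f i)
    have key : (1 + f a) * A - Complex.exp (f a) * E
        = (1 + f a) * (A - E) + ((1 + f a) - Complex.exp (f a)) * E := by ring
    have hE : ‖E‖ ≤ Real.exp (∑ i ∈ s, ‖f i‖) := by
      rw [Complex.norm_exp]
      exact Real.exp_le_exp.2 (le_trans (Complex.re_le_norm _)
        (le_trans (norm_sum_le _ _) (le_of_eq rfl)))
    have h1fa : ‖1 + f a‖ ≤ Real.exp ‖f a‖ := by
      refine le_trans (norm_add_le _ _) ?_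
      simp only [norm_one]
      linarith [Real.add_one_le_exp ‖f a‖]
    have hsub : ‖(1 + f a) - Complex.exp (f a)‖ ≤ ‖f a‖ ^ 2 := by
      have := Complex.norm_exp_sub_one_sub_id_le (x := f a) h1a
      calc ‖(1 + f a) - Complex.exp (f a)‖
          = ‖Complex.exp (f a) - 1 - f a‖ := by
            rw [← norm_neg]; ring_nf
        _ ≤ ‖f a‖ ^ 2 := this
    have t1 := mul_le_mul h1fa ihs (norm_nonneg _) (Real.exp_pos _).le
    have t2 := mul_le_mul hsub hE (norm_nonneg _) (by positivity)
    have main : ‖(1 + f a) * A - Complex.exp (f a) * E‖ ≤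
        Real.exp ‖f a‖ * ((∑ i ∈ s, ‖f i‖ ^ 2) * Real.exp (∑ i ∈ s, ‖f i‖))
          + ‖f a‖ ^ 2 * Real.exp (∑ i ∈ s, ‖f i‖) := by
      rw [key]
      refine le_trans (norm_add_le _ _) ?_
      rw [norm_mul, norm_mul]
      exact add_le_add t1 t2
    refine main.trans ?_
    rw [Real.exp_add]
    have e1 : (1:ℝ) ≤ Real.exp ‖f a‖ := Real.one_le_exp (norm_nonneg _)
    have e2 : (0:ℝ) < Real.exp (∑ i ∈ s, ‖f i‖) := Real.exp_pos _
    nlinarith [mul_nonneg (mul_nonneg (sq_nonneg ‖f a‖) e2.le) (sub_nonneg.2 e1)]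

/-- `μ` is the total variation measure of the complex measure `ν`. -/
def IsTotalVariation {X : Type*} [MeasurableSpace X] (ν : MeasureTheory.ComplexMeasure X)
    (μ : MeasureTheory.Measure X) : Prop :=
  ∀ A : Set X, MeasurableSet A →
    IsLUB {r : ℝ | ∃ P : Finset (Set X), (∀ s ∈ P, MeasurableSet s) ∧ (∀ s ∈ P, s ⊆ A) ∧
        ((P : Set (Set X)).Pairwise fun s t => Disjoint s t) ∧ ⋃₀ (P : Set (Set X)) = A ∧
        r = ∑ s ∈ P, ‖ν s‖} ((μ A).toReal)

/-- Atomless case of the product-limit lemma: if the total variation `μ = |ν|` has no atoms and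
the maximal `|ν|`-mass of a cell tends to `0`, then `∏_{P ∈ 𝒫_n}(1 + ν(P)) → e^{ν(X)}`. -/
theorem tendsto_prod_one_add_complexMeasure_atomless {X : Type*} [MeasurableSpace X]
    [MeasurableSingletonClass X] [MeasurableSpace.CountablySeparated X]
    (ν : MeasureTheory.ComplexMeasure X) (μ : MeasureTheory.Measure X)
    [MeasureTheory.IsFiniteMeasure μ] (hμ : IsTotalVariation ν μ)
    (hatomless : ∀ a : X, μ {a} = 0)
    (Part : ℕ → Finset (Set X))
    (hmeas : ∀ n, ∀ P ∈ Part n, MeasurableSet P)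
    (hdisj : ∀ n, ∀ P ∈ Part n, ∀ Q ∈ Part n, P ≠ Q → Disjoint P Q)
    (hcover : ∀ n, ⋃₀ (↑(Part n) : Set (Set X)) = Set.univ)
    (hrefine : ∀ n, ∀ P ∈ Part (n + 1), ∃ Q ∈ Part n, P ⊆ Q)
    (hsep : ∀ a b : X, a ≠ b → ∃ n, ∃ P ∈ Part n, a ∈ P ∧ b ∉ P)
    (hmax : Tendsto (fun n => (Part n).sup fun P => μ P) atTop (nhds 0)) :
    Tendsto (fun n => ∏ P ∈ Part n, (1 + ν P)) atTop (nhds (Complex.exp (ν Set.univ))) := by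
  classical
  set M : ℝ := (μ Set.univ).toReal with hM
  set ε : ℕ → ℝ := fun n => ((Part n).sup fun P => μ P).toReal with hε
  have hpw : ∀ n, ((Part n : Set (Set X)).Pairwise fun s t => Disjoint s t) := by
    intro n P hP Q hQ hne
    exact hdisj n P (Finset.mem_coe.1 hP) Q (Finset.mem_coe.1 hQ) hne
  -- total mass bound
  have hsup_le : ∀ n, ((Part n).sup fun P => μ P) ≤ μ Set.univ := by
    intro n
    exact Finset.sup_le fun P _ => measure_mono (Set.subset_univ P)
  have hsup_ne : ∀ n, ((Part n).sup fun P => μ P) ≠ ⊤ :=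
    fun n => ((hsup_le n).trans_lt (measure_lt_top μ _)).ne
  -- norm bound per cell
  have hcell : ∀ n, ∀ P ∈ Part n, ‖ν P‖ ≤ ε n := by
    intro n P hP
    have hlub := hμ P (hmeas n P hP)
    have hmem : ‖ν P‖ ∈ {r : ℝ | ∃ Q : Finset (Set X), (∀ s ∈ Q, MeasurableSet s) ∧
        (∀ s ∈ Q, s ⊆ P) ∧ ((Q : Set (Set X)).Pairwise fun s t => Disjoint s t) ∧
        ⋃₀ (Q : Set (Set X)) = P ∧ r = ∑ s ∈ Q, ‖ν s‖} := by
      refine ⟨{P}, ?_, ?_, ?_, ?_, ?_⟩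
      · intro s hs; rw [Finset.mem_singleton] at hs; exact hs ▸ hmeas n P hP
      · intro s hs; rw [Finset.mem_singleton] at hs; exact hs ▸ subset_rfl
      · simp
      · simp
      · simp
    have h1 : ‖ν P‖ ≤ (μ P).toReal := hlub.1 hmem
    refine h1.trans ?_
    exact ENNReal.toReal_mono (hsup_ne n) (Finset.le_sup hP)
  -- sum bound
  have hsum : ∀ n, ∑ P ∈ Part n, ‖ν P‖ ≤ M := by
    intro n
    have hlub := hμ Set.univ MeasurableSet.univ
    exact hlub.1 ⟨Part n, fun s hs => hmeas n s hs, fun s _ => Set.subset_univ s,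
      hpw n, hcover n, rfl⟩
  -- finite additivity
  have htotal : ∀ n, ∑ P ∈ Part n, ν P = ν Set.univ := by
    intro n
    rw [← vm_sUnion ν (Part n) (hmeas n) (hpw n), hcover n]
  -- ε → 0
  have hε0 : Tendsto ε atTop (nhds 0) := by
    have := (ENNReal.tendsto_toReal (a := 0) (by simp)).comp hmax
    exact this
  have hεnn : ∀ n, 0 ≤ ε n := fun n => ENNReal.toReal_nonneg
  -- main estimate
  rw [tendsto_iff_norm_sub_tendsto_zero]
  have hbdd : ∀ᶠ n in atTop, ‖(∏ P ∈ Part n, (1 + ν P)) - Complex.exp (ν Set.univ)‖ ≤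
      ε n * (M * Real.exp M) := by
    filter_upwards [Tendsto.eventually_le_const (by norm_num : (0:ℝ) < 1) hε0] with n hn1
    have h1 : ∀ P ∈ Part n, ‖ν P‖ ≤ 1 := fun P hP => (hcell n P hP).trans hn1
    have hk := key_est (fun P => ν P) (Part n) h1
    rw [htotal n] at hk
    refine hk.trans ?_
    have hsq : ∑ P ∈ Part n, ‖ν P‖ ^ 2 ≤ ε n * M := by
      calc ∑ P ∈ Part n, ‖ν P‖ ^ 2 ≤ ∑ P ∈ Part n, ε n * ‖ν P‖ := by
            refine Finset.sum_le_sum fun P hP => ?_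
            rw [sq]
            exact mul_le_mul_of_nonneg_right (hcell n P hP) (norm_nonneg _)
        _ = ε n * ∑ P ∈ Part n, ‖ν P‖ := by rw [Finset.mul_sum]
        _ ≤ ε n * M := mul_le_mul_of_nonneg_left (hsum n) (hεnn n)
    have hexp : Real.exp (∑ P ∈ Part n, ‖ν P‖) ≤ Real.exp M :=
      Real.exp_le_exp.2 (hsum n)
    calc (∑ P ∈ Part n, ‖ν P‖ ^ 2) * Real.exp (∑ P ∈ Part n, ‖ν P‖)
        ≤ (ε n * M) * Real.exp M := by
          refine mul_le_mul hsq hexp (Real.exp_pos _).le ?_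
          exact mul_nonneg (hεnn n) ENNReal.toReal_nonneg
      _ = ε n * (M * Real.exp M) := by ring
  have hlim : Tendsto (fun n => ε n * (M * Real.exp M)) atTop (nhds 0) := by
    simpa using hε0.mul_const (M * Real.exp M)
  exact squeeze_zero' (Eventually.of_forall fun n => norm_nonneg _) hbdd hlim
end

section
/- Let ν be a finite (positive) measure on a countably separated measurable space with dissecting system (𝒫_n), and for each cell P choose a_P ∈ P maximizing ν({p}) over p ∈ P. Then max_{P∈𝒫_n} ν(P ∖ {a_P}) decreases to 0 as n → ∞. -/
open Filter MeasureTheory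

/-- For a finite measure `ν` on a countably separated space with a dissecting system `(𝒫_n)` and
`a_P ∈ P` a point of maximal `ν`-mass in each cell `P`, the quantity
`max_{P ∈ 𝒫_n} ν(P ∖ {a_P})` decreases to `0` as `n → ∞`. -/
theorem tendsto_sup_measure_cell_diff_maximal_point {X : Type*} [MeasurableSpace X]
    [MeasurableSingletonClass X] [MeasurableSpace.CountablySeparated X]
    (ν : MeasureTheory.Measure X) [MeasureTheory.IsFiniteMeasure ν]
    (Part : ℕ → Finset (Set X))
    (hmeas : ∀ n, ∀ P ∈ Part n, MeasurableSet P)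
    (hdisj : ∀ n, ∀ P ∈ Part n, ∀ Q ∈ Part n, P ≠ Q → Disjoint P Q)
    (hcover : ∀ n, ⋃₀ (↑(Part n) : Set (Set X)) = Set.univ)
    (hrefine : ∀ n, ∀ P ∈ Part (n + 1), ∃ Q ∈ Part n, P ⊆ Q)
    (hsep : ∀ a b : X, a ≠ b → ∃ n, ∃ P ∈ Part n, a ∈ P ∧ b ∉ P)
    (a : Set X → X)
    (ha : ∀ n, ∀ P ∈ Part n, a P ∈ P ∧ ∀ p ∈ P, ν {p} ≤ ν {a P}) :
    Antitone (fun n => (Part n).sup fun P => ν (P \ {a P})) ∧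
      Tendsto (fun n => (Part n).sup fun P => ν (P \ {a P})) atTop (nhds 0) := by
  classical
  -- uniqueness of the cell containing a given point
  have uniq : ∀ n, ∀ Q1 ∈ Part n, ∀ Q2 ∈ Part n, ∀ x, x ∈ Q1 → x ∈ Q2 → Q1 = Q2 := by
    intro n Q1 h1 Q2 h2 x hx1 hx2
    by_contra hne
    exact (Set.disjoint_left.1 (hdisj n Q1 h1 Q2 h2 hne)) hx1 hx2
  -- key monotonicity lemma
  have key : ∀ n n', ∀ P ∈ Part n', ∀ Q ∈ Part n, P ⊆ Q →
      ν (P \ {a P}) ≤ ν (Q \ {a Q}) := by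
    intro n n' P hP Q hQ hPQ
    obtain ⟨haP, hmaxP⟩ := ha n' P hP
    obtain ⟨haQ, hmaxQ⟩ := ha n Q hQ
    by_cases h : a Q ∈ P
    · have h1 : ν {a P} = ν {a Q} := le_antisymm (hmaxQ _ (hPQ haP)) (hmaxP _ h)
      rw [measure_diff (Set.singleton_subset_iff.2 haP)
          (measurableSet_singleton _).nullMeasurableSet (measure_ne_top ν _),
        measure_diff (Set.singleton_subset_iff.2 haQ)
          (measurableSet_singleton _).nullMeasurableSet (measure_ne_top ν _), h1]
      exact tsub_le_tsub (measure_mono hPQ) le_rfl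
    · refine measure_mono fun x hx => ⟨hPQ hx.1, fun hxa => ?_⟩
      rw [Set.mem_singleton_iff] at hxa
      exact h (hxa ▸ hx.1)
  have hanti : Antitone (fun n => (Part n).sup fun P => ν (P \ {a P})) := by
    apply antitone_nat_of_succ_le
    intro n
    apply Finset.sup_le
    intro P hP
    obtain ⟨Q, hQ, hPQ⟩ := hrefine n P hP
    exact le_trans (key n (n + 1) P hP Q hQ hPQ)
      (Finset.le_sup (f := fun P => ν (P \ {a P})) hQ)
  refine ⟨hanti, ?_⟩
  have htend := tendsto_atTop_iInf hanti
  suffices h0 : (⨅ n, (Part n).sup fun P => ν (P \ {a P})) = 0 by rwa [h0] at htend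
  by_contra hne
  set ε := ⨅ n, (Part n).sup fun P => ν (P \ {a P}) with hεdef
  have hε : 0 < ε := pos_iff_ne_zero.2 hne
  have hfn : ∀ n, ε ≤ (Part n).sup fun P => ν (P \ {a P}) := fun n => iInf_le _ n
  -- maximizing cells
  have hPex : ∀ n, ∃ P ∈ Part n, ε ≤ ν (P \ {a P}) := by
    intro n
    have hnon : (Part n).Nonempty := by
      rw [Finset.nonempty_iff_ne_empty]
      intro hemp
      have h := hfn n
      rw [hemp, Finset.sup_empty] at h
      exact hne (by simpa using h)
    obtain ⟨P, hP, hPs⟩ := Finset.exists_mem_eq_sup (Part n) hnon fun P => ν (P \ {a P})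
    exact ⟨P, hP, hPs ▸ hfn n⟩
  choose Pc hPc hPgood using hPex
  -- cell of a point
  have cell_ex : ∀ (n : ℕ) (x : X), ∃ Q, Q ∈ Part n ∧ x ∈ Q := by
    intro n x
    have hx : x ∈ ⋃₀ (↑(Part n) : Set (Set X)) := by rw [hcover n]; trivial
    obtain ⟨Q, hQ, hxQ⟩ := hx
    exact ⟨Q, hQ, hxQ⟩
  choose cell hcell₁ hcell₂ using cell_ex
  have cell_succ : ∀ n x, cell (n + 1) x ⊆ cell n x := by
    intro n x
    obtain ⟨Q, hQ, hsub⟩ := hrefine n _ (hcell₁ (n + 1) x)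
    have : cell n x = Q := uniq n _ (hcell₁ n x) Q hQ x (hcell₂ n x) (hsub (hcell₂ (n + 1) x))
    rw [this]; exact hsub
  have cell_anti : ∀ x, Antitone fun n => cell n x := fun x =>
    antitone_nat_of_succ_le fun n => cell_succ n x
  have cell_eq : ∀ m, cell m (a (Pc m)) = Pc m := fun m =>
    uniq m _ (hcell₁ m _) _ (hPc m) _ (hcell₂ m _) (ha m _ (hPc m)).1
  -- ultrafilter choice of a chain
  set U : Ultrafilter ℕ := Ultrafilter.of atTop with hUdef
  have hUatTop : ∀ s ∈ (atTop : Filter ℕ), s ∈ U := fun s hs => Ultrafilter.of_le atTop hs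
  have hQex : ∀ n, ∃ Q ∈ Part n, {m | cell n (a (Pc m)) = Q} ∈ U := by
    intro n
    by_contra h
    push_neg at h
    have hcompl : ∀ Q ∈ Part n, {m | cell n (a (Pc m)) = Q}ᶜ ∈ U := fun Q hQ =>
      Ultrafilter.compl_mem_iff_notMem.2 (h Q hQ)
    have hmem : (⋂ Q ∈ Part n, {m | cell n (a (Pc m)) = Q}ᶜ) ∈ U :=
      (Filter.biInter_mem (Part n).finite_toSet).2 hcompl
    obtain ⟨m, hm⟩ := Filter.nonempty_of_mem hmem
    have := Set.mem_iInter₂.1 hm _ (hcell₁ n (a (Pc m)))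
    exact this rfl
  choose Q hQmem hQU using hQex
  have hQsub : ∀ n, Q (n + 1) ⊆ Q n := by
    intro n
    obtain ⟨m, hm1, hm2⟩ := Filter.nonempty_of_mem (Filter.inter_mem (hQU (n + 1)) (hQU n))
    rw [← hm1, ← hm2]
    exact cell_succ n _
  have hQanti : Antitone Q := antitone_nat_of_succ_le hQsub
  have hQgood : ∀ n, ε ≤ ν (Q n \ {a (Q n)}) := by
    intro n
    obtain ⟨m, hm1, hm2⟩ := Filter.nonempty_of_mem
      (Filter.inter_mem (hQU n) (hUatTop _ (mem_atTop n)))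
    have hsub : Pc m ⊆ Q n := by
      have h : cell m (a (Pc m)) ⊆ cell n (a (Pc m)) := cell_anti (a (Pc m)) hm2
      rw [cell_eq m] at h
      rw [← hm1]
      exact h
    exact le_trans (hPgood m) (key n m (Pc m) (hPc m) (Q n) (hQmem n) hsub)
  -- the intersection
  set K : Set X := ⋂ n, Q n with hKdef
  have hQms : ∀ n, MeasurableSet (Q n) := fun n => hmeas n _ (hQmem n)
  have htendK : Tendsto (fun n => ν (Q n)) atTop (nhds (ν K)) :=
    tendsto_measure_iInter_atTop (fun n => (hQms n).nullMeasurableSet) hQanti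
      ⟨0, measure_ne_top ν _⟩
  have hKε : ε ≤ ν K :=
    ge_of_tendsto' htendK fun n => le_trans (hQgood n) (measure_mono Set.diff_subset)
  have hKne : K.Nonempty := by
    rw [Set.nonempty_iff_ne_empty]
    intro hemp
    rw [hemp, measure_empty] at hKε
    exact hne (le_antisymm hKε zero_le)
  obtain ⟨x, hx⟩ := hKne
  have hxQ : ∀ n, x ∈ Q n := fun n => Set.mem_iInter.1 hx n
  have hKsub : K ⊆ {x} := by
    intro y hy
    rw [Set.mem_singleton_iff]
    by_contra hne'
    obtain ⟨n, P, hP, hyP, hxP⟩ := hsep y x hne'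
    have hyQ : y ∈ Q n := Set.mem_iInter.1 hy n
    have : P = Q n := uniq n P hP (Q n) (hQmem n) y hyP hyQ
    exact hxP (this ▸ hxQ n)
  -- final contradiction
  have hεn : ∀ n, ε ≤ ν (Q n \ {x}) := by
    intro n
    refine le_trans (hQgood n) ?_
    obtain ⟨haQ, hmaxQ⟩ := ha n (Q n) (hQmem n)
    rw [measure_diff (Set.singleton_subset_iff.2 haQ)
        (measurableSet_singleton _).nullMeasurableSet (measure_ne_top ν _),
      measure_diff (Set.singleton_subset_iff.2 (hxQ n))
        (measurableSet_singleton _).nullMeasurableSet (measure_ne_top ν _)]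
    exact tsub_le_tsub le_rfl (hmaxQ x (hxQ n))
  have htend2 : Tendsto (fun n => ν (Q n \ {x})) atTop (nhds (ν (⋂ n, (Q n \ {x})))) :=
    tendsto_measure_iInter_atTop
      (fun n => ((hQms n).diff (measurableSet_singleton x)).nullMeasurableSet)
      (fun i j hij => Set.diff_subset_diff_left (hQanti hij)) ⟨0, measure_ne_top ν _⟩
  have hinter : (⋂ n, (Q n \ {x})) = ∅ := by
    rw [Set.eq_empty_iff_forall_notMem]
    intro y hy
    have h1 : y ∈ K := Set.mem_iInter.2 fun n => (Set.mem_iInter.1 hy n).1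
    exact (Set.mem_iInter.1 hy 0).2 (hKsub h1)
  rw [hinter, measure_empty] at htend2
  have : ε ≤ 0 := ge_of_tendsto' htend2 hεn
  exact hne (le_antisymm this zero_le)
end

section
/- Let H be a Hilbert space, Ω ∈ H of norm one, and let x, y be von Neumann algebras on H such that every X ∈ x commutes with every Y ∈ y on the closed subspace generated by (x ∨ y)Ω, and ⟨Ω, XYΩ⟩ = ⟨Ω, XΩ⟩⟨Ω, YΩ⟩ for all X ∈ x, Y ∈ y. Then the orthogonal projection onto ℂΩ equals the product [cl(xΩ)] · [cl(yΩ)] of the orthogonal projections onto the closures of xΩ and yΩ. -/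
open scoped ComplexInnerProductSpace

/-- Independence implies product of projections: if the von Neumann algebras `x` and `y` commute
on `cl((x ∨ y)Ω)` and `⟨Ω, XYΩ⟩ = ⟨Ω, XΩ⟩⟨Ω, YΩ⟩` for all `X ∈ x`, `Y ∈ y`, then the rank-one
projection onto `ℂΩ` equals `[cl(xΩ)]·[cl(yΩ)]`. -/
theorem rankOne_proj_eq_proj_mul_proj_of_indep {H : Type*} [NormedAddCommGroup H]
    [InnerProductSpace ℂ H] [CompleteSpace H]
    (Ω : H) (hΩ : ‖Ω‖ = 1) (x y : VonNeumannAlgebra H)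
    (hcomm : ∀ X ∈ x, ∀ Y ∈ y, ∀ v ∈
      (Submodule.span ℂ {w : H | ∃ Z ∈ Set.centralizer (Set.centralizer
          ((x : Set (H →L[ℂ] H)) ∪ (y : Set (H →L[ℂ] H)))), w = Z Ω}).topologicalClosure,
      X (Y v) = Y (X v))
    (hfact : ∀ X ∈ x, ∀ Y ∈ y, ⟪Ω, X (Y Ω)⟫ = ⟪Ω, X Ω⟫ * ⟪Ω, Y Ω⟫)
    (Px Py : H →L[ℂ] H)
    (hPx : IsSelfAdjoint Px ∧ Px ∘L Px = Px ∧
      LinearMap.range (Px : H →ₗ[ℂ] H) = (Submodule.span ℂ {w : H | ∃ X ∈ x, w = X Ω}).topologicalClosure)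
    (hPy : IsSelfAdjoint Py ∧ Py ∘L Py = Py ∧
      LinearMap.range (Py : H →ₗ[ℂ] H) = (Submodule.span ℂ {w : H | ∃ Y ∈ y, w = Y Ω}).topologicalClosure) :
    ∀ v : H, Px (Py v) = ⟪Ω, v⟫ • Ω := by
  obtain ⟨hPxsa, hPxidem, hPxrange⟩ := hPx
  obtain ⟨hPysa, hPyidem, hPyrange⟩ := hPy
  have hxadj : ∀ a b : H, ⟪Px a, b⟫ = ⟪a, Px b⟫ := fun a b => by
    conv_lhs => rw [← hPxsa.adjoint_eq]
    rw [ContinuousLinearMap.adjoint_inner_left]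
  have hyadj : ∀ a b : H, ⟪Py a, b⟫ = ⟪a, Py b⟫ := fun a b => by
    conv_lhs => rw [← hPysa.adjoint_eq]
    rw [ContinuousLinearMap.adjoint_inner_left]
  -- Px fixes its range
  have hxfix : ∀ w ∈ LinearMap.range (Px : H →ₗ[ℂ] H), Px w = w := by
    rintro w ⟨u, rfl⟩
    have := congrArg (fun T : H →L[ℂ] H => T u) hPxidem
    simpa using this
  have hyfix : ∀ w ∈ LinearMap.range (Py : H →ₗ[ℂ] H), Py w = w := by
    rintro w ⟨u, rfl⟩
    have := congrArg (fun T : H →L[ℂ] H => T u) hPyidem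
    simpa using this
  -- Px kills vectors orthogonal to its range
  have hxkill : ∀ w : H, (∀ r ∈ LinearMap.range (Px : H →ₗ[ℂ] H), ⟪r, w⟫ = 0) → Px w = 0 := by
    intro w hw
    have h1 : ⟪Px w, Px w⟫ = 0 := by
      rw [hxadj]
      have : Px (Px w) ∈ LinearMap.range (Px : H →ₗ[ℂ] H) := ⟨Px w, rfl⟩
      have h2 := hw _ this
      rw [← inner_conj_symm, h2, map_zero]
    exact inner_self_eq_zero.mp h1
  -- Ω is in both ranges
  have hΩx : Ω ∈ LinearMap.range (Px : H →ₗ[ℂ] H) := by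
    rw [hPxrange]
    apply Submodule.le_topologicalClosure
    exact Submodule.subset_span ⟨1, x.one_mem, by simp⟩
  have hΩy : Ω ∈ LinearMap.range (Py : H →ₗ[ℂ] H) := by
    rw [hPyrange]
    apply Submodule.le_topologicalClosure
    exact Submodule.subset_span ⟨1, y.one_mem, by simp⟩
  -- key inner product identity
  have hkey : ∀ X ∈ x, ∀ Y ∈ y, ⟪X Ω, Y Ω⟫ = ⟪X Ω, Ω⟫ * ⟪Ω, Y Ω⟫ := by
    intro X hX Y hY
    have hsX : star X ∈ x := star_mem hX
    have h := hfact (star X) hsX Y hY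
    rw [ContinuousLinearMap.star_eq_adjoint] at h
    rwa [ContinuousLinearMap.adjoint_inner_right, ContinuousLinearMap.adjoint_inner_right] at h
  -- Px (Y Ω) = ⟪Ω, Y Ω⟫ • Ω for Y ∈ y
  have hstep : ∀ Y ∈ y, Px (Y Ω) = ⟪Ω, Y Ω⟫ • Ω := by
    intro Y hY
    have hperp : ∀ r ∈ LinearMap.range (Px : H →ₗ[ℂ] H), ⟪r, Y Ω - ⟪Ω, Y Ω⟫ • Ω⟫ = 0 := by
      intro r hr
      rw [hPxrange] at hr
      have hsub : (Submodule.span ℂ {w : H | ∃ X ∈ x, w = X Ω}).topologicalClosure ≤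
          (Submodule.span ℂ {Y Ω - ⟪Ω, Y Ω⟫ • Ω})ᗮ := by
        apply Submodule.topologicalClosure_minimal
        · rw [Submodule.span_le]
          rintro w ⟨X, hX, rfl⟩
          rw [SetLike.mem_coe, Submodule.mem_orthogonal_singleton_iff_inner_left]
          rw [inner_sub_right, inner_smul_right, hkey X hX Y hY]
          ring
        · exact (Submodule.span ℂ {Y Ω - ⟪Ω, Y Ω⟫ • Ω}).isClosed_orthogonal
      exact Submodule.inner_left_of_mem_orthogonal
        (Submodule.mem_span_singleton_self _) (hsub hr)
    have h0 : Px (Y Ω - ⟪Ω, Y Ω⟫ • Ω) = 0 := hxkill _ hperp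
    have hfix : Px (⟪Ω, Y Ω⟫ • Ω) = ⟪Ω, Y Ω⟫ • Ω := by
      rw [map_smul, hxfix Ω hΩx]
    have := map_sub Px (Y Ω) (⟪Ω, Y Ω⟫ • Ω)
    rw [h0, hfix] at this
    have h2 : Px (Y Ω) - ⟪Ω, Y Ω⟫ • Ω = 0 := this.symm
    exact sub_eq_zero.mp h2
  -- extend to the closure: Px u = ⟪Ω, u⟫ • Ω for u in range Py
  set T : H →L[ℂ] H := Px - (innerSL ℂ Ω).smulRight Ω with hT
  have hker : LinearMap.range (Py : H →ₗ[ℂ] H) ≤ LinearMap.ker (T : H →ₗ[ℂ] H) := by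
    rw [hPyrange]
    apply Submodule.topologicalClosure_minimal
    · rw [Submodule.span_le]
      rintro w ⟨Y, hY, rfl⟩
      rw [SetLike.mem_coe, LinearMap.mem_ker]
      simp only [hT, ContinuousLinearMap.coe_sub', Pi.sub_apply,
        ContinuousLinearMap.smulRight_apply, innerSL_apply_apply, ContinuousLinearMap.coe_coe]
      rw [hstep Y hY, sub_self]
    · exact ContinuousLinearMap.isClosed_ker T
  intro v
  have hv : T (Py v) = 0 := hker ⟨v, rfl⟩
  simp only [hT, ContinuousLinearMap.coe_sub', Pi.sub_apply,
    ContinuousLinearMap.smulRight_apply, innerSL_apply_apply] at hv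
  have h3 : Px (Py v) = ⟪Ω, Py v⟫ • Ω := sub_eq_zero.mp hv
  rw [h3, ← hyadj, hyfix Ω hΩy]
end

section
/- Let H be a Hilbert space, Ω a unit vector, and x, y von Neumann algebras on H with x and y commuting on cl((x∨y)Ω) and with |Ω⟩⟨Ω| = [cl(xΩ)][cl(yΩ)]. Then for all X ∈ x and Y ∈ y, ⟨Ω, XYΩ⟩ = ⟨Ω, XΩ⟩⟨Ω, YΩ⟩. -/
open scoped ComplexInnerProductSpace

/-- Product of projections implies independence: if the von Neumann algebras `x` and `y` commute
on `cl((x ∨ y)Ω)` and `|Ω⟩⟨Ω| = [cl(xΩ)][cl(yΩ)]`, then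
`⟨Ω, XYΩ⟩ = ⟨Ω, XΩ⟩⟨Ω, YΩ⟩` for all `X ∈ x`, `Y ∈ y`. -/
theorem indep_of_rankOne_proj_eq_proj_mul_proj {H : Type*} [NormedAddCommGroup H]
    [InnerProductSpace ℂ H] [CompleteSpace H]
    (Ω : H) (hΩ : ‖Ω‖ = 1) (x y : VonNeumannAlgebra H)
    (hcomm : ∀ X ∈ x, ∀ Y ∈ y, ∀ v ∈
      (Submodule.span ℂ {w : H | ∃ Z ∈ Set.centralizer (Set.centralizer
          ((x : Set (H →L[ℂ] H)) ∪ (y : Set (H →L[ℂ] H)))), w = Z Ω}).topologicalClosure,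
      X (Y v) = Y (X v))
    (Px Py : H →L[ℂ] H)
    (hPx : IsSelfAdjoint Px ∧ Px ∘L Px = Px ∧
      LinearMap.range (Px : H →ₗ[ℂ] H) = (Submodule.span ℂ {w : H | ∃ X ∈ x, w = X Ω}).topologicalClosure)
    (hPy : IsSelfAdjoint Py ∧ Py ∘L Py = Py ∧
      LinearMap.range (Py : H →ₗ[ℂ] H) = (Submodule.span ℂ {w : H | ∃ Y ∈ y, w = Y Ω}).topologicalClosure)
    (hprod : ∀ v : H, Px (Py v) = ⟪Ω, v⟫ • Ω) :
    ∀ X ∈ x, ∀ Y ∈ y, ⟪Ω, X (Y Ω)⟫ = ⟪Ω, X Ω⟫ * ⟪Ω, Y Ω⟫ := by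
  intro X hX Y hY
  obtain ⟨hPxsa, hPx2, hPxr⟩ := hPx
  obtain ⟨hPysa, hPy2, hPyr⟩ := hPy
  -- X*Ω is fixed by Px
  have hXmem : (star X) Ω ∈ LinearMap.range (Px : H →ₗ[ℂ] H) := by
    rw [hPxr]
    exact Submodule.le_topologicalClosure _
      (Submodule.subset_span ⟨star X, star_mem hX, rfl⟩)
  have hYmem : Y Ω ∈ LinearMap.range (Py : H →ₗ[ℂ] H) := by
    rw [hPyr]
    exact Submodule.le_topologicalClosure _
      (Submodule.subset_span ⟨Y, hY, rfl⟩)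
  have hfixX : Px ((star X) Ω) = (star X) Ω := by
    obtain ⟨w, hw⟩ := hXmem
    rw [ContinuousLinearMap.coe_coe] at hw
    rw [← hw, ← ContinuousLinearMap.comp_apply, hPx2]
  have hfixY : Py (Y Ω) = Y Ω := by
    obtain ⟨w, hw⟩ := hYmem
    rw [ContinuousLinearMap.coe_coe] at hw
    rw [← hw, ← ContinuousLinearMap.comp_apply, hPy2]
  have key : ⟪Ω, X (Y Ω)⟫ = ⟪(star X) Ω, Y Ω⟫ := by
    rw [ContinuousLinearMap.star_eq_adjoint, ContinuousLinearMap.adjoint_inner_left]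
  rw [key, ← hfixY, ← hfixX]
  have hadj : ⟪Px ((star X) Ω), Py (Y Ω)⟫ = ⟪(star X) Ω, Px (Py (Y Ω))⟫ := by
    conv_lhs => rw [← hPxsa.adjoint_eq]
    exact ContinuousLinearMap.adjoint_inner_left Px _ _
  rw [hadj, hprod, inner_smul_right, hfixY]
  have : ⟪(star X) Ω, Ω⟫ = ⟪Ω, X Ω⟫ := by
    rw [ContinuousLinearMap.star_eq_adjoint, ContinuousLinearMap.adjoint_inner_left]
  rw [this]; ring
end

section
/- Let H be a Hilbert space, Ω a unit vector, and x, y self-adjoint multiplicative subsets of B(H) containing the identity such that XYΩ = YXΩ and ⟨Ω, XYΩ⟩ = ⟨Ω, XΩ⟩⟨Ω, YΩ⟩ for all X ∈ x, Y ∈ y. Then for all n, all X, X₁,…,Xₙ ∈ x and all Y, Y₁,…,Yₙ ∈ y: XY(XₙYₙ⋯X₁Y₁Ω) = YX(XₙYₙ⋯X₁Y₁Ω). -/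
open scoped ComplexInnerProductSpace

/-- Raising independence from multiplicative sets: if `x, y ⊆ B(H)` are self-adjoint
multiplicative sets containing `1` with `XYΩ = YXΩ` and
`⟨Ω, XYΩ⟩ = ⟨Ω, XΩ⟩⟨Ω, YΩ⟩` for all `X ∈ x`, `Y ∈ y`, then for all `n` and all words
`XₙYₙ⋯X₁Y₁Ω`, any `X ∈ x` and `Y ∈ y` commute on that vector. -/
theorem commute_on_words_of_indep {H : Type*} [NormedAddCommGroup H]
    [InnerProductSpace ℂ H] [CompleteSpace H]
    (Ω : H) (hΩ : ‖Ω‖ = 1) (x y : Set (H →L[ℂ] H))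
    (hx1 : (1 : H →L[ℂ] H) ∈ x) (hy1 : (1 : H →L[ℂ] H) ∈ y)
    (hxadj : ∀ X ∈ x, ContinuousLinearMap.adjoint X ∈ x)
    (hyadj : ∀ Y ∈ y, ContinuousLinearMap.adjoint Y ∈ y)
    (hxmul : ∀ X₁ ∈ x, ∀ X₂ ∈ x, X₁ ∘L X₂ ∈ x)
    (hymul : ∀ Y₁ ∈ y, ∀ Y₂ ∈ y, Y₁ ∘L Y₂ ∈ y)
    (hcomm : ∀ X ∈ x, ∀ Y ∈ y, X (Y Ω) = Y (X Ω))
    (hfact : ∀ X ∈ x, ∀ Y ∈ y, ⟪Ω, X (Y Ω)⟫ = ⟪Ω, X Ω⟫ * ⟪Ω, Y Ω⟫) :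
    ∀ (n : ℕ) (X Y : H →L[ℂ] H), X ∈ x → Y ∈ y →
      ∀ (Xs Ys : Fin n → H →L[ℂ] H), (∀ i, Xs i ∈ x) → (∀ i, Ys i ∈ y) →
        X (Y ((List.ofFn fun i => Xs i ∘L Ys i).prod Ω)) =
          Y (X ((List.ofFn fun i => Xs i ∘L Ys i).prod Ω)) := by
  -- First: every word is of the form A (B Ω) with A ∈ x, B ∈ y.
  have key : ∀ (n : ℕ) (Xs Ys : Fin n → H →L[ℂ] H), (∀ i, Xs i ∈ x) → (∀ i, Ys i ∈ y) →
      ∃ A ∈ x, ∃ B ∈ y, (List.ofFn fun i => Xs i ∘L Ys i).prod Ω = A (B Ω) := by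
    intro n
    induction n with
    | zero =>
      intro Xs Ys _ _
      exact ⟨1, hx1, 1, hy1, by simp⟩
    | succ n ih =>
      intro Xs Ys hXs hYs
      obtain ⟨A, hA, B, hB, hAB⟩ := ih (fun i => Xs i.succ) (fun i => Ys i.succ)
        (fun i => hXs i.succ) (fun i => hYs i.succ)
      refine ⟨Xs 0 ∘L A, hxmul _ (hXs 0) _ hA, Ys 0 ∘L B, hymul _ (hYs 0) _ hB, ?_⟩
      have : (List.ofFn fun i : Fin (n+1) => Xs i ∘L Ys i).prod
          = (Xs 0 ∘L Ys 0) * (List.ofFn fun i : Fin n => Xs i.succ ∘L Ys i.succ).prod := by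
        rw [List.ofFn_succ, List.prod_cons]
      rw [this]
      simp only [ContinuousLinearMap.mul_apply, hAB, ContinuousLinearMap.coe_comp',
        Function.comp_apply]
      -- Goal: Xs 0 (Ys 0 (A (B Ω))) = (Xs 0) (A ((Ys 0 ∘L B) Ω))
      have h1 : A (B Ω) = B (A Ω) := hcomm A hA B hB
      have h2 : (Ys 0 ∘L B) (A Ω) = A ((Ys 0 ∘L B) Ω) :=
        (hcomm A hA _ (hymul _ (hYs 0) _ hB)).symm
      rw [h1]
      have : Ys 0 (B (A Ω)) = (Ys 0 ∘L B) (A Ω) := rfl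
      rw [this, h2]; rfl
  intro n X Y hX hY Xs Ys hXs hYs
  obtain ⟨A, hA, B, hB, hAB⟩ := key n Xs Ys hXs hYs
  rw [hAB]
  have hXA : X ∘L A ∈ x := hxmul _ hX _ hA
  have hYB : Y ∘L B ∈ y := hymul _ hY _ hB
  -- X (Y (A (B Ω))) = (X ∘L A) ((Y ∘L B) Ω)
  have left : X (Y (A (B Ω))) = (X ∘L A) ((Y ∘L B) Ω) := by
    rw [hcomm A hA B hB]
    have h2 : (Y ∘L B) (A Ω) = A ((Y ∘L B) Ω) := (hcomm A hA _ hYB).symm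
    have : Y (B (A Ω)) = (Y ∘L B) (A Ω) := rfl
    rw [this, h2]; rfl
  have right : Y (X (A (B Ω))) = (X ∘L A) ((Y ∘L B) Ω) := by
    have h1 : X (A (B Ω)) = (X ∘L A) (B Ω) := rfl
    rw [h1, hcomm _ hXA B hB]
    have : Y (B ((X ∘L A) Ω)) = (Y ∘L B) ((X ∘L A) Ω) := rfl
    rw [this, hcomm _ hXA _ hYB]
  rw [left, right]
end

section
/- Let H be a Hilbert space, x a factor of H (x ∨ x' = B(H)), and Ω a unit vector such that |Ω⟩⟨Ω| = XX' for some X ∈ x and X' ∈ x' (the commutant). Then there exist projections P ∈ x and P' ∈ x' with |Ω⟩⟨Ω| = PP'. -/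
open scoped ComplexInnerProductSpace

namespace RankOneProjHelper

variable {H : Type*} [NormedAddCommGroup H] [InnerProductSpace ℂ H] [CompleteSpace H]

/-- Closure of the range of `A`. -/
noncomputable abbrev rcl (A : H →L[ℂ] H) : Submodule ℂ H :=
  (LinearMap.range (A : H →ₗ[ℂ] H)).topologicalClosure

/-- The orthogonal projection onto the closure of the range of `A`, as an operator on `H`. -/
noncomputable def rproj (A : H →L[ℂ] H) : H →L[ℂ] H :=
  (rcl A).subtypeL ∘L (rcl A).orthogonalProjectionOnto

lemma rproj_apply (A : H →L[ℂ] H) (v : H) :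
    rproj A v = ((rcl A).orthogonalProjectionOnto v : H) := rfl

lemma rproj_mem (A : H →L[ℂ] H) (v : H) : rproj A v ∈ rcl A := by
  rw [rproj_apply]; exact Submodule.coe_mem _

lemma rproj_of_mem (A : H →L[ℂ] H) {v : H} (hv : v ∈ rcl A) : rproj A v = v := by
  exact Submodule.starProjection_eq_self_iff.2 hv

lemma rproj_of_perp (A : H →L[ℂ] H) {v : H} (hv : v ∈ (rcl A)ᗮ) : rproj A v = 0 := by
  rw [rproj_apply, Submodule.orthogonalProjectionOnto_apply_of_mem_orthogonal hv,
    Submodule.coe_zero]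

lemma isSelfAdjoint_rproj (A : H →L[ℂ] H) : IsSelfAdjoint (rproj A) :=
  isSelfAdjoint_starProjection _

lemma rproj_idem (A : H →L[ℂ] H) : rproj A ∘L rproj A = rproj A := by
  ext v
  rw [ContinuousLinearMap.comp_apply]
  exact rproj_of_mem A (rproj_mem A v)

lemma mapsTo_rcl {A T : H →L[ℂ] H} (h : T * A = A * T) {v : H} (hv : v ∈ rcl A) :
    T v ∈ rcl A := by
  have h1 : T '' (LinearMap.range (A : H →ₗ[ℂ] H) : Set H) ⊆ (LinearMap.range (A : H →ₗ[ℂ] H) : Set H) := by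
    rintro - ⟨-, ⟨w, rfl⟩, rfl⟩
    refine ⟨T w, ?_⟩
    have := congrFun (congrArg DFunLike.coe h) w
    simpa [ContinuousLinearMap.mul_apply] using this.symm
  have h2 : T v ∈ closure (T '' (LinearMap.range (A : H →ₗ[ℂ] H) : Set H)) :=
    image_closure_subset_closure_image T.continuous ⟨v, hv, rfl⟩
  exact closure_mono h1 h2

lemma mapsTo_rcl_perp {A T : H →L[ℂ] H} (h : star T * A = A * star T) {v : H}
    (hv : v ∈ (rcl A)ᗮ) : T v ∈ (rcl A)ᗮ := by
  intro w hw
  have hsw : star T w ∈ rcl A := mapsTo_rcl h hw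
  have : ⟪w, T v⟫ = ⟪star T w, v⟫ := by
    rw [ContinuousLinearMap.star_eq_adjoint, ContinuousLinearMap.adjoint_inner_left]
  rw [this]
  exact hv _ hsw

/-- If `T` and `star T` commute with `A`, then `T` commutes with the projection onto the
closure of the range of `A`. -/
lemma commute_rproj {A T : H →L[ℂ] H} (h : T * A = A * T) (h' : star T * A = A * star T) :
    T * rproj A = rproj A * T := by
  ext v
  have hdec : T v = T (rproj A v) + T (v - rproj A v) := by
    rw [← map_add]; congr 1; abel
  have h1 : rproj A (T (rproj A v)) = T (rproj A v) :=
    rproj_of_mem A (mapsTo_rcl h (rproj_mem A v))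
  have hperp : v - rproj A v ∈ (rcl A)ᗮ := by
    exact Submodule.sub_starProjection_mem_orthogonal (K := rcl A) v
  have h2 : rproj A (T (v - rproj A v)) = 0 :=
    rproj_of_perp A (mapsTo_rcl_perp h' hperp)
  simp only [ContinuousLinearMap.mul_apply]
  rw [hdec, map_add, h1, h2, add_zero]

end RankOneProjHelper

open RankOneProjHelper in
/-- If `x` is a factor (`x ∨ x' = B(H)`) and the rank-one projection onto `ℂΩ` decomposes as
`XX'` with `X ∈ x`, `X' ∈ x'`, then it also decomposes as a product `PP'` of projections
`P ∈ x` and `P' ∈ x'`. -/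
theorem rankOne_proj_eq_proj_mul_proj_of_eq_mul {H : Type*} [NormedAddCommGroup H]
    [InnerProductSpace ℂ H] [CompleteSpace H]
    (x : VonNeumannAlgebra H)
    (hfactor : Set.centralizer (Set.centralizer
      ((x : Set (H →L[ℂ] H)) ∪ (x.commutant : Set (H →L[ℂ] H)))) = Set.univ)
    (Ω : H) (hΩ : ‖Ω‖ = 1)
    (X X' : H →L[ℂ] H) (hX : X ∈ x) (hX' : X' ∈ x.commutant)
    (hXX' : ∀ v : H, X (X' v) = ⟪Ω, v⟫ • Ω) :
    ∃ P ∈ x, ∃ P' ∈ x.commutant,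
      IsSelfAdjoint P ∧ P ∘L P = P ∧ IsSelfAdjoint P' ∧ P' ∘L P' = P' ∧
      ∀ v : H, P (P' v) = ⟪Ω, v⟫ • Ω := by
  have hΩΩ : ⟪Ω, Ω⟫ = 1 := by
    rw [inner_self_eq_norm_sq_to_K, hΩ]; norm_num
  set A : H →L[ℂ] H := star X * X with hA
  set B : H →L[ℂ] H := star X' * X' with hB
  have hAx : A ∈ x := mul_mem (star_mem hX) hX
  have hBx : B ∈ x.commutant := mul_mem (star_mem hX') hX'
  have hsX' : star X' ∈ x.commutant := star_mem hX'
  -- the rank-one projection as an operator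
  set F : H →L[ℂ] H := X * X' with hF
  have hFapp : ∀ v : H, F v = ⟪Ω, v⟫ • Ω := hXX'
  have hFsa : IsSelfAdjoint F := by
    rw [ContinuousLinearMap.isSelfAdjoint_iff_isSymmetric]
    intro u v
    simp only [ContinuousLinearMap.coe_coe, hFapp, inner_smul_left, inner_smul_right,
      inner_conj_symm]
    ring
  have hAsa : IsSelfAdjoint A := by
    rw [hA, IsSelfAdjoint, star_mul, star_star]
  have hBsa : IsSelfAdjoint B := by
    rw [hB, IsSelfAdjoint, star_mul, star_star]
  have hip : ∀ (S : H →L[ℂ] H), IsSelfAdjoint S → ∀ a b : H, ⟪S a, b⟫ = ⟪a, S b⟫ :=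
    fun S hS a b => hS.isSymmetric a b
  -- A * B = F
  have hABF : A * B = F := by
    have hc2 : X * star X' = star X' * X := VonNeumannAlgebra.mem_commutant_iff.1 hsX' X hX
    have hc3 : star X * star X' = star X' * star X :=
      VonNeumannAlgebra.mem_commutant_iff.1 hsX' (star X) (star_mem hX)
    have : A * B = star F * F := by
      calc A * B = star X * X * (star X' * X') := by rw [hA, hB]
        _ = star X * (X * star X') * X' := by noncomm_ring
        _ = star X * (star X' * X) * X' := by rw [hc2]
        _ = star X * star X' * (X * X') := by noncomm_ring
        _ = star X' * star X * (X * X') := by rw [hc3]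
        _ = star (X * X') * (X * X') := by rw [← star_mul]
        _ = star F * F := by rw [hF]
    rw [this, hFsa.star_eq]
    ext v
    simp only [ContinuousLinearMap.mul_apply, hFapp, inner_smul_right, hΩΩ, mul_one]
  have hBAF : B * A = F := by
    rw [← hABF]
    exact (VonNeumannAlgebra.mem_commutant_iff.1 hBx A hAx).symm
  -- Ω lies in both range closures
  have hΩA : Ω ∈ rcl A := by
    refine Submodule.le_topologicalClosure _ ⟨B Ω, ?_⟩
    have := congrFun (congrArg DFunLike.coe hABF) Ω
    simpa [ContinuousLinearMap.mul_apply, hFapp, hΩΩ, hΩ] using this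
  have hΩB : Ω ∈ rcl B := by
    refine Submodule.le_topologicalClosure _ ⟨A Ω, ?_⟩
    have := congrFun (congrArg DFunLike.coe hBAF) Ω
    simpa [ContinuousLinearMap.mul_apply, hFapp, hΩΩ, hΩ] using this
  -- the projections
  set P : H →L[ℂ] H := rproj A with hP
  set P' : H →L[ℂ] H := rproj B with hP'
  -- P ∈ x, P' ∈ x'
  have hPx : P ∈ x := by
    rw [← x.commutant_commutant, VonNeumannAlgebra.mem_commutant_iff]
    intro T hT
    exact commute_rproj (VonNeumannAlgebra.mem_commutant_iff.1 hT A hAx).symm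
      (VonNeumannAlgebra.mem_commutant_iff.1 (star_mem hT) A hAx).symm
  have hP'x : P' ∈ x.commutant := by
    rw [VonNeumannAlgebra.mem_commutant_iff]
    intro T hT
    exact commute_rproj (VonNeumannAlgebra.mem_commutant_iff.1 hBx T hT)
      (VonNeumannAlgebra.mem_commutant_iff.1 hBx (star T) (star_mem hT)).symm.symm
  have hPcomm : P * P' = P' * P := VonNeumannAlgebra.mem_commutant_iff.1 hP'x P hPx
  have hPsa : IsSelfAdjoint P := isSelfAdjoint_rproj A
  have hP'sa : IsSelfAdjoint P' := isSelfAdjoint_rproj B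
  -- key vanishing lemma : rcl A ∩ rcl B ∩ Ω^⊥ = 0
  have hkey : ∀ u : H, u ∈ rcl A → u ∈ rcl B → ⟪Ω, u⟫ = 0 → u = 0 := by
    intro u huA huB hu0
    have hABu : A (B u) = 0 := by
      have := congrFun (congrArg DFunLike.coe hABF) u
      simp only [ContinuousLinearMap.mul_apply, hFapp, hu0, zero_smul] at this
      exact this
    -- B u ⊥ rcl A, hence ⟪u, B u⟫ = 0
    have hBuPerp : ∀ z ∈ rcl A, ⟪z, B u⟫ = 0 := by
      have hclosed : IsClosed {z : H | ⟪z, B u⟫ = (0 : ℂ)} :=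
        isClosed_eq (continuous_id.inner continuous_const) continuous_const
      have hz : (LinearMap.range (A : H →ₗ[ℂ] H) : Set H) ⊆ {z : H | ⟪z, B u⟫ = (0 : ℂ)} := by
        rintro - ⟨w', rfl⟩
        show ⟪A w', B u⟫ = 0
        rw [hip A hAsa w' (B u), hABu, inner_zero_right]
      intro z hzc
      exact closure_minimal hz hclosed hzc
    have huBu : ⟪u, B u⟫ = 0 := hBuPerp u huA
    -- hence X' u = 0, so B u = 0
    have hX'u : X' u = 0 := by
      have : ⟪X' u, X' u⟫ = 0 := by
        rw [← huBu, hB, ContinuousLinearMap.mul_apply, ContinuousLinearMap.star_eq_adjoint,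
          ContinuousLinearMap.adjoint_inner_right]
      exact inner_self_eq_zero.mp this
    have hBu : B u = 0 := by
      rw [hB, ContinuousLinearMap.mul_apply, hX'u, map_zero]
    -- hence u ⊥ rcl B, and u ∈ rcl B, so u = 0
    have huPerp : ∀ z ∈ rcl B, ⟪z, u⟫ = 0 := by
      have hclosed : IsClosed {z : H | ⟪z, u⟫ = (0 : ℂ)} :=
        isClosed_eq (continuous_id.inner continuous_const) continuous_const
      have hz : (LinearMap.range (B : H →ₗ[ℂ] H) : Set H) ⊆ {z : H | ⟪z, u⟫ = (0 : ℂ)} := by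
        rintro - ⟨w', rfl⟩
        show ⟪B w', u⟫ = 0
        rw [hip B hBsa w' u, hBu, inner_zero_right]
      intro z hzc
      exact closure_minimal hz hclosed hzc
    exact inner_self_eq_zero.mp (huPerp u huB)
  -- conclusion
  refine ⟨P, hPx, P', hP'x, hPsa, rproj_idem A, hP'sa, rproj_idem B, fun v => ?_⟩
  have hPΩ : P Ω = Ω := rproj_of_mem A hΩA
  have hP'Ω : P' Ω = Ω := rproj_of_mem B hΩB
  set w : H := v - ⟪Ω, v⟫ • Ω with hw
  have hΩw : ⟪Ω, w⟫ = 0 := by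
    simp [hw, inner_sub_right, inner_smul_right, hΩΩ, hΩ]
  have hu0 : P (P' w) = 0 := by
    refine hkey (P (P' w)) (rproj_mem A _) ?_ ?_
    · have hc := congrFun (congrArg DFunLike.coe hPcomm) w
      simp only [ContinuousLinearMap.mul_apply] at hc
      rw [hc]
      exact rproj_mem B _
    · rw [← hip P hPsa Ω (P' w), hPΩ, ← hip P' hP'sa Ω w, hP'Ω, hΩw]
  have hv : v = ⟪Ω, v⟫ • Ω + w := by rw [hw]; abel
  calc P (P' v) = P (P' (⟪Ω, v⟫ • Ω + w)) := by rw [← hv]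
    _ = ⟪Ω, v⟫ • P (P' Ω) + P (P' w) := by rw [map_add, map_smul, map_add, map_smul]
    _ = ⟪Ω, v⟫ • Ω := by rw [hP'Ω, hPΩ, hu0, add_zero]
end

section
/- Let (𝖡, Ω) be a unital factorization on a Hilbert space H and let x, y ∈ 𝖡 with x ∧ y = 0. Then the subspace cl(xΩ) is orthogonal to cl(yΩ) ⊖ ℂΩ. -/
open scoped ComplexInnerProductSpace

/-- A unital factorization on a Hilbert space `H`: a Boolean algebra of factors of `H`
(with meet = intersection, join = generated von Neumann algebra (double centralizer of the
union), complement = commutant) together with a unit vector `unit` under which each member is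
independent of its commutant. -/
structure UnitalFactorization (H : Type*) [NormedAddCommGroup H] [InnerProductSpace ℂ H]
    [CompleteSpace H] where
  mem : Set (VonNeumannAlgebra H)
  unit : H
  norm_unit : ‖unit‖ = 1
  nonempty : mem.Nonempty
  compl_mem : ∀ x ∈ mem, x.commutant ∈ mem
  inf_mem : ∀ x ∈ mem, ∀ y ∈ mem, ∃ z ∈ mem,
    (z : Set (H →L[ℂ] H)) = (x : Set (H →L[ℂ] H)) ∩ (y : Set (H →L[ℂ] H))
  sup_mem : ∀ x ∈ mem, ∀ y ∈ mem, ∃ z ∈ mem,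
    (z : Set (H →L[ℂ] H)) =
      Set.centralizer (Set.centralizer ((x : Set (H →L[ℂ] H)) ∪ (y : Set (H →L[ℂ] H))))
  factor : ∀ x ∈ mem,
    Set.centralizer (Set.centralizer
      ((x : Set (H →L[ℂ] H)) ∪ (x.commutant : Set (H →L[ℂ] H)))) = Set.univ
  distrib : ∀ x ∈ mem, ∀ y ∈ mem, ∀ z ∈ mem,
    (x : Set (H →L[ℂ] H)) ∩
        Set.centralizer (Set.centralizer ((y : Set (H →L[ℂ] H)) ∪ (z : Set (H →L[ℂ] H)))) =
      Set.centralizer (Set.centralizer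
        (((x : Set (H →L[ℂ] H)) ∩ (y : Set (H →L[ℂ] H))) ∪
          ((x : Set (H →L[ℂ] H)) ∩ (z : Set (H →L[ℂ] H)))))
  indep : ∀ x ∈ mem, ∀ X ∈ x, ∀ X' ∈ x.commutant,
    ⟪unit, X (X' unit)⟫ = ⟪unit, X unit⟫ * ⟪unit, X' unit⟫

/-- In a unital factorization `(𝖡, Ω)`, if `x, y ∈ 𝖡` have `x ∧ y = 0` (their intersection
consists of the scalar multiples of the identity), then `cl(xΩ)` is orthogonal to
`cl(yΩ) ⊖ ℂΩ`. -/
theorem orthogonal_of_meet_eq_bot {H : Type*} [NormedAddCommGroup H] [InnerProductSpace ℂ H]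
    [CompleteSpace H] (F : UnitalFactorization H) (x y : VonNeumannAlgebra H)
    (hx : x ∈ F.mem) (hy : y ∈ F.mem)
    (hmeet : (x : Set (H →L[ℂ] H)) ∩ (y : Set (H →L[ℂ] H)) =
      Set.range fun c : ℂ => c • (1 : H →L[ℂ] H)) :
    ∀ ξ ∈ closure {w : H | ∃ X ∈ x, w = X F.unit},
      ∀ ξ' ∈ closure {w : H | ∃ Y ∈ y, w = Y F.unit},
        ⟪ξ, ξ' - ⟪F.unit, ξ'⟫ • F.unit⟫ = 0 := by
  classical
  -- Step 1: y ⊆ centralizer x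
  have hsub : (y : Set (H →L[ℂ] H)) ⊆ Set.centralizer (x : Set (H →L[ℂ] H)) := by
    have hd := F.distrib y hy x hx x.commutant (F.compl_mem x hx)
    rw [F.factor x hx, Set.inter_univ] at hd
    have h1 : ((y : Set (H →L[ℂ] H)) ∩ (x : Set (H →L[ℂ] H))) ∪
        ((y : Set (H →L[ℂ] H)) ∩ (x.commutant : Set (H →L[ℂ] H))) ⊆
        Set.centralizer (x : Set (H →L[ℂ] H)) := by
      rintro T (hT | hT)
      · rw [Set.inter_comm, hmeet] at hT
        obtain ⟨c, rfl⟩ := hT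
        intro A _
        simp [mul_smul_comm, smul_mul_assoc]
      · simpa [VonNeumannAlgebra.coe_commutant] using hT.2
    calc (y : Set (H →L[ℂ] H)) = Set.centralizer (Set.centralizer
          (((y : Set (H →L[ℂ] H)) ∩ (x : Set (H →L[ℂ] H))) ∪
            ((y : Set (H →L[ℂ] H)) ∩ (x.commutant : Set (H →L[ℂ] H))))) := hd
      _ ⊆ Set.centralizer (Set.centralizer
            (Set.centralizer (x : Set (H →L[ℂ] H)))) :=
          Set.centralizer_subset (Set.centralizer_subset h1)
      _ = Set.centralizer (x : Set (H →L[ℂ] H)) :=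
          Set.centralizer_centralizer_centralizer _
  -- Step 2: base case
  have key : ∀ X ∈ x, ∀ Y ∈ y,
      ⟪X F.unit, Y F.unit - ⟪F.unit, Y F.unit⟫ • F.unit⟫ = 0 := by
    intro X hX Y hY
    have hXs : ContinuousLinearMap.adjoint X ∈ x := by
      rw [← ContinuousLinearMap.star_eq_adjoint]; exact star_mem hX
    have hY' : Y ∈ x.commutant := by
      rw [← SetLike.mem_coe, VonNeumannAlgebra.coe_commutant]
      exact hsub hY
    have h := F.indep x hx _ hXs Y hY'
    rw [inner_sub_right, inner_smul_right]
    have e1 : ⟪X F.unit, Y F.unit⟫ = ⟪F.unit, (ContinuousLinearMap.adjoint X) (Y F.unit)⟫ :=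
      (ContinuousLinearMap.adjoint_inner_right X _ _).symm
    have e2 : ⟪X F.unit, F.unit⟫ = ⟪F.unit, (ContinuousLinearMap.adjoint X) F.unit⟫ :=
      (ContinuousLinearMap.adjoint_inner_right X _ _).symm
    rw [e1, e2, h]
    ring
  intro ξ hξ ξ' hξ'
  -- Step 3: extend over ξ
  have step1 : ∀ Y ∈ y, ⟪ξ, Y F.unit - ⟪F.unit, Y F.unit⟫ • F.unit⟫ = 0 := by
    intro Y hY
    refine closure_minimal ?_
      (isClosed_eq (continuous_id.inner continuous_const) continuous_const) hξ
    rintro w ⟨X, hX, rfl⟩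
    exact key X hX Y hY
  -- Step 4: extend over ξ'
  have hc : Continuous fun w : H => ⟪ξ, w - ⟪F.unit, w⟫ • F.unit⟫ :=
    continuous_const.inner (continuous_id.sub
      ((continuous_const.inner continuous_id).smul continuous_const))
  refine closure_minimal ?_ (isClosed_eq hc continuous_const) hξ'
  rintro w ⟨Y, hY, rfl⟩
  exact step1 Y hY
end

section
/- Let 𝖡 be a factorization of a separable Hilbert space H. If for every monotone increasing sequence (x_n) in 𝖡 the join ∨_n x_n lies in 𝖡, then 𝖡 is closed under arbitrary joins. (Key step: 𝖡 satisfies the countable chain condition — there is no uncountable antichain of pairwise-disjoint nonzero elements.) -/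
open scoped ComplexInnerProductSpace

set_option linter.unusedSectionVars false
set_option maxHeartbeats 1000000

section Aux
variable {H : Type*} [NormedAddCommGroup H] [InnerProductSpace ℂ H] [CompleteSpace H]

lemma scalars_mem_centralizer (s : Set (H →L[ℂ] H)) :
    (Set.range fun c : ℂ => c • (1 : H →L[ℂ] H)) ⊆ Set.centralizer s := by
  rintro - ⟨c, rfl⟩ g _
  simp [mul_smul_comm, smul_mul_assoc]

lemma scalars_mem_vn (a : VonNeumannAlgebra H) :
    (Set.range fun c : ℂ => c • (1 : H →L[ℂ] H)) ⊆ (a : Set (H →L[ℂ] H)) := by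
  rintro - ⟨c, rfl⟩
  have h1 : (1 : H →L[ℂ] H) ∈ a.toStarSubalgebra := one_mem _
  simpa using a.toStarSubalgebra.smul_mem h1 c

lemma centralizer_univ_eq_scalars (v : H) (hv : ‖v‖ = 1) :
    Set.centralizer (Set.univ : Set (H →L[ℂ] H))
      = Set.range fun c : ℂ => c • (1 : H →L[ℂ] H) := by
  refine Set.Subset.antisymm ?_ (scalars_mem_centralizer _)
  intro T hT
  refine ⟨⟪v, T v⟫, ?_⟩
  ext u
  have hS : ∀ S : H →L[ℂ] H, S * T = T * S := fun S => hT S (Set.mem_univ S)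
  have key := congrArg (fun W : H →L[ℂ] H => W v) (hS ((innerSL ℂ v).smulRight u))
  simp only [ContinuousLinearMap.mul_apply, ContinuousLinearMap.smulRight_apply,
    innerSL_apply_apply] at key
  have hvv : ⟪v, v⟫ = 1 := by
    rw [inner_self_eq_norm_sq_to_K, hv]; norm_num
  rw [hvv, one_smul] at key
  simp only [ContinuousLinearMap.smul_apply, ContinuousLinearMap.one_apply]
  exact key

lemma proj_commute (K : Submodule ℂ H) [K.HasOrthogonalProjection] (T : H →L[ℂ] H)
    (hT : ∀ x ∈ K, T x ∈ K) (hT' : ∀ x ∈ K, ContinuousLinearMap.adjoint T x ∈ K) (v : H) :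
    T ((K.subtypeL.comp (K.orthogonalProjectionOnto)) v)
      = (K.subtypeL.comp (K.orthogonalProjectionOnto)) (T v) := by
  have hperp : ∀ w ∈ Kᗮ, T w ∈ Kᗮ := by
    intro w hw
    rw [Submodule.mem_orthogonal] at hw ⊢
    intro k hk
    rw [← ContinuousLinearMap.adjoint_inner_left]
    exact hw _ (hT' k hk)
  have hdecomp : v = (K.orthogonalProjectionOnto v : H) + (v - K.orthogonalProjectionOnto v) := by abel
  have h1 : (K.orthogonalProjectionOnto (T (K.orthogonalProjectionOnto v : H)) : H)
      = T (K.orthogonalProjectionOnto v : H) :=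
    Submodule.starProjection_eq_self_iff.2 (hT _ (K.orthogonalProjectionOnto v).2)
  have h2 : K.orthogonalProjectionOnto (T (v - K.orthogonalProjectionOnto v)) = 0 := by
    apply Submodule.orthogonalProjectionOnto_apply_of_mem_orthogonal
    exact hperp _ (Submodule.sub_starProjection_mem_orthogonal (K := K) v)
  calc T ((K.subtypeL.comp (K.orthogonalProjectionOnto)) v)
      = (K.orthogonalProjectionOnto (T (K.orthogonalProjectionOnto v : H)) : H) := by
        rw [h1]; rfl
    _ = (K.orthogonalProjectionOnto (T ((K.orthogonalProjectionOnto v : H) + (v - K.orthogonalProjectionOnto v))) : H) := by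
        rw [map_add, map_add, h2]; simp
    _ = (K.subtypeL.comp (K.orthogonalProjectionOnto)) (T v) := by rw [← hdecomp]; rfl

lemma vn_trivial (a : VonNeumannAlgebra H) (Ω : H) (hΩ : ‖Ω‖ = 1)
    (hfac : Set.centralizer (Set.centralizer
      ((a : Set (H →L[ℂ] H)) ∪ (a.commutant : Set (H →L[ℂ] H)))) = Set.univ)
    (h : ∀ X ∈ a, X Ω = ⟪Ω, X Ω⟫ • Ω) :
    (a : Set (H →L[ℂ] H)) = Set.range fun c : ℂ => c • (1 : H →L[ℂ] H) := by
  -- the commutant of a ∪ a' consists of scalars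
  have hcent : Set.centralizer ((a : Set (H →L[ℂ] H)) ∪ (a.commutant : Set (H →L[ℂ] H)))
      = Set.range fun c : ℂ => c • (1 : H →L[ℂ] H) := by
    have h2 : Set.centralizer (Set.centralizer (Set.centralizer
        ((a : Set (H →L[ℂ] H)) ∪ (a.commutant : Set (H →L[ℂ] H)))))
        = Set.centralizer Set.univ := by rw [hfac]
    rwa [Set.centralizer_centralizer_centralizer, centralizer_univ_eq_scalars Ω hΩ] at h2
  -- the generating set
  set G : Set H := {w | ∃ X ∈ a, ∃ X' ∈ a.commutant, w = X' (X Ω)} with hG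
  set N : Submodule ℂ H := Submodule.span ℂ G with hN
  set K : Submodule ℂ H := N.topologicalClosure with hK
  have hΩN : Ω ∈ N := by
    apply Submodule.subset_span
    exact ⟨1, one_mem a, 1, one_mem a.commutant, by simp⟩
  -- invariance of N under a and a'
  have hinv : ∀ T ∈ (a : Set (H →L[ℂ] H)) ∪ (a.commutant : Set (H →L[ℂ] H)),
      ∀ x ∈ N, T x ∈ N := by
    intro T hT x hx
    have himg : ∀ w ∈ G, T w ∈ N := by
      rintro - ⟨X, hX, X', hX', rfl⟩
      apply Submodule.subset_span
      rcases hT with hTa | hTa'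
      · refine ⟨T * X, mul_mem hTa hX, X', hX', ?_⟩
        have hc : T * X' = X' * T := VonNeumannAlgebra.mem_commutant_iff.1 hX' T hTa
        have hcc := congrArg (fun W : H →L[ℂ] H => W (X Ω)) hc
        simp only [ContinuousLinearMap.mul_apply] at hcc
        simp only [ContinuousLinearMap.mul_apply]
        exact hcc
      · exact ⟨X, hX, T * X', mul_mem hTa' hX', rfl⟩
    -- span invariance
    have : Submodule.map (T : H →ₗ[ℂ] H) N ≤ N := by
      rw [hN, Submodule.map_span, Submodule.span_le]
      rintro - ⟨w, hw, rfl⟩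
      exact himg w hw
    exact this ⟨x, hx, rfl⟩
  have hinvK : ∀ T ∈ (a : Set (H →L[ℂ] H)) ∪ (a.commutant : Set (H →L[ℂ] H)),
      ∀ x ∈ K, T x ∈ K := by
    intro T hT x hx
    have : Set.MapsTo T (N : Set H) (N : Set H) := fun y hy => hinv T hT y hy
    have hmt := this.closure T.continuous
    exact hmt hx
  -- star-closedness of the union
  have hstar : ∀ T, T ∈ (a : Set (H →L[ℂ] H)) ∪ (a.commutant : Set (H →L[ℂ] H)) →
      ContinuousLinearMap.adjoint T ∈
        (a : Set (H →L[ℂ] H)) ∪ (a.commutant : Set (H →L[ℂ] H)) := by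
    intro T hT
    rcases hT with hTa | hTa'
    · left; rw [← ContinuousLinearMap.star_eq_adjoint]; exact star_mem hTa
    · right; rw [← ContinuousLinearMap.star_eq_adjoint]; exact star_mem hTa'
  -- the projection onto K is scalar, hence N is dense
  have hdense : ∀ v : H, v ∈ K := by
    set P : H →L[ℂ] H := K.subtypeL.comp (K.orthogonalProjectionOnto) with hP
    have hPcomm : P ∈ Set.centralizer
        ((a : Set (H →L[ℂ] H)) ∪ (a.commutant : Set (H →L[ℂ] H))) := by
      intro T hT
      ext v
      exact proj_commute K T (hinvK T hT) (hinvK _ (hstar T hT)) v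
    rw [hcent] at hPcomm
    obtain ⟨c, hc⟩ := hPcomm
    have hPΩ : P Ω = Ω := by
      have : Ω ∈ K := N.le_topologicalClosure hΩN
      exact Submodule.starProjection_eq_self_iff.2 this
    have hcΩ : c • Ω = Ω := by
      have := hPΩ
      rw [← hc] at this
      simpa using this
    have hc1 : c = 1 := by
      have h1 := congrArg (fun w => ⟪Ω, w⟫) hcΩ
      simp only [inner_smul_right] at h1
      rw [inner_self_eq_norm_sq_to_K, hΩ] at h1
      simpa using h1
    intro v
    have : P v = v := by rw [← hc]; simp [hc1]
    exact Submodule.starProjection_eq_self_iff.1 this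
  -- conclude each X ∈ a is scalar
  refine Set.Subset.antisymm ?_ ?_
  · intro X hX
    refine ⟨⟪Ω, X Ω⟫, ?_⟩
    set c := ⟪Ω, X Ω⟫ with hc
    set Y : H →L[ℂ] H := X - c • 1 with hY
    have hYa : Y ∈ a := by
      apply sub_mem hX
      have h1 : (1 : H →L[ℂ] H) ∈ a.toStarSubalgebra := one_mem _
      simpa using a.toStarSubalgebra.smul_mem h1 c
    have hYΩ : Y Ω = 0 := by
      simp only [hY, ContinuousLinearMap.sub_apply, ContinuousLinearMap.smul_apply,
        ContinuousLinearMap.one_apply]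
      rw [h X hX]; simp [hc]
    have hYzero : Y = 0 := by
      have hDense : Dense ((Submodule.span ℂ G : Submodule ℂ H) : Set H) := by
        rw [dense_iff_closure_eq]
        apply Set.eq_univ_of_forall
        intro v
        exact hdense v
      refine ContinuousLinearMap.ext_on hDense ?_
      rintro - ⟨X₀, hX₀, X', hX', rfl⟩
      have hcomm : Y * X' = X' * Y := VonNeumannAlgebra.mem_commutant_iff.1 hX' Y hYa
      have hcc := congrArg (fun W : H →L[ℂ] H => W (X₀ Ω)) hcomm
      simp only [ContinuousLinearMap.mul_apply] at hcc
      rw [hcc]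
      have hX₀Ω : X₀ Ω = ⟪Ω, X₀ Ω⟫ • Ω := h X₀ hX₀
      rw [hX₀Ω, map_smul, hYΩ]
      simp
    have : X = c • 1 := by
      have := sub_eq_zero.1 (hY ▸ hYzero)
      simpa using this
    exact this.symm
  · rintro - ⟨c, rfl⟩
    have h1 : (1 : H →L[ℂ] H) ∈ a.toStarSubalgebra := one_mem _
    simpa using a.toStarSubalgebra.smul_mem h1 c

lemma cc_mono {s t : Set (H →L[ℂ] H)} (h : s ⊆ t) :
    Set.centralizer (Set.centralizer s) ⊆ Set.centralizer (Set.centralizer t) :=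
  Set.centralizer_subset (Set.centralizer_subset h)

lemma cc_cc (s : Set (H →L[ℂ] H)) :
    Set.centralizer (Set.centralizer (Set.centralizer (Set.centralizer s)))
      = Set.centralizer (Set.centralizer s) := by
  rw [Set.centralizer_centralizer_centralizer]

lemma cc_eq_of_between {s t : Set (H →L[ℂ] H)} (h1 : s ⊆ t)
    (h2 : t ⊆ Set.centralizer (Set.centralizer s)) :
    Set.centralizer (Set.centralizer t) = Set.centralizer (Set.centralizer s) :=
  Set.Subset.antisymm (by simpa [cc_cc] using cc_mono h2) (cc_mono h1)

/-- orthogonality of the centered vectors, given independence. -/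
lemma inner_centered_eq_zero (Ω : H) (hΩ : ‖Ω‖ = 1) (Xa Xb : H →L[ℂ] H)
    (h1 : ⟪Ω, (ContinuousLinearMap.adjoint Xa) (Xb Ω)⟫
      = ⟪Ω, ContinuousLinearMap.adjoint Xa Ω⟫ * ⟪Ω, Xb Ω⟫) :
    ⟪Xa Ω - ⟪Ω, Xa Ω⟫ • Ω, Xb Ω - ⟪Ω, Xb Ω⟫ • Ω⟫ = 0 := by
  have hΩΩ : ⟪Ω, Ω⟫ = 1 := by rw [inner_self_eq_norm_sq_to_K, hΩ]; norm_num
  have hab : ⟪Xa Ω, Xb Ω⟫ = (starRingEnd ℂ) ⟪Ω, Xa Ω⟫ * ⟪Ω, Xb Ω⟫ := by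
    rw [← ContinuousLinearMap.adjoint_inner_right, h1,
      ContinuousLinearMap.adjoint_inner_right, ← inner_conj_symm (Xa Ω) Ω]
  have haΩ : ⟪Xa Ω, Ω⟫ = (starRingEnd ℂ) ⟪Ω, Xa Ω⟫ := (inner_conj_symm _ _).symm
  simp only [inner_sub_left, inner_sub_right, inner_smul_left, inner_smul_right,
    hab, haΩ, hΩΩ]
  ring

end Aux

/-- If a unital factorization of a separable Hilbert space is closed under joins of monotone
sequences, then it satisfies the countable chain condition and is closed under arbitrary
joins. -/
theorem complete_of_sequentially_complete {H : Type*} [NormedAddCommGroup H]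
    [InnerProductSpace ℂ H] [CompleteSpace H] [TopologicalSpace.SeparableSpace H]
    (F : UnitalFactorization H)
    (hseq : ∀ x : ℕ → VonNeumannAlgebra H, (∀ n, x n ∈ F.mem) →
      (Monotone fun n => ((x n : Set (H →L[ℂ] H)))) →
      ∃ z ∈ F.mem, (z : Set (H →L[ℂ] H)) =
        Set.centralizer (Set.centralizer (⋃ n, ((x n : Set (H →L[ℂ] H)))))) :
    (∀ A : Set (VonNeumannAlgebra H), A ⊆ F.mem →
      (∀ a ∈ A, (a : Set (H →L[ℂ] H)) ≠ Set.range fun c : ℂ => c • (1 : H →L[ℂ] H)) →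
      (∀ a ∈ A, ∀ b ∈ A, a ≠ b → (a : Set (H →L[ℂ] H)) ∩ (b : Set (H →L[ℂ] H)) =
        Set.range fun c : ℂ => c • (1 : H →L[ℂ] H)) →
      A.Countable) ∧
    ∀ X : Set (VonNeumannAlgebra H), X ⊆ F.mem →
      ∃ z ∈ F.mem, (z : Set (H →L[ℂ] H)) =
        Set.centralizer (Set.centralizer (⋃ x ∈ X, ((x : Set (H →L[ℂ] H))))) := by
  set Ω := F.unit with hΩdef
  have hΩ : ‖Ω‖ = 1 := F.norm_unit
  set Sc : Set (H →L[ℂ] H) := Set.range fun c : ℂ => c • (1 : H →L[ℂ] H) with hSc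
  -- if two members have scalar intersection, the second is inside the commutant of the first
  have hsub_commutant : ∀ a ∈ F.mem, ∀ b ∈ F.mem,
      (a : Set (H →L[ℂ] H)) ∩ (b : Set (H →L[ℂ] H)) = Sc →
      (b : Set (H →L[ℂ] H)) ⊆ (a.commutant : Set (H →L[ℂ] H)) := by
    intro a ha b hb hab
    have ha' := F.compl_mem a ha
    obtain ⟨w, hw, hweq⟩ := F.inf_mem b hb a.commutant ha'
    have hd := F.distrib b hb a ha a.commutant ha'
    rw [F.factor a ha] at hd
    have hba : (b : Set (H →L[ℂ] H)) ∩ (a : Set (H →L[ℂ] H)) = Sc := by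
      rw [Set.inter_comm]; exact hab
    rw [hba] at hd
    have hScsub : Sc ⊆ (b : Set (H →L[ℂ] H)) ∩ (a.commutant : Set (H →L[ℂ] H)) :=
      Set.subset_inter (scalars_mem_vn b) (scalars_mem_vn a.commutant)
    rw [Set.union_eq_self_of_subset_left hScsub, ← hweq, w.centralizer_centralizer,
      Set.inter_univ] at hd
    rw [hweq] at hd
    exact hd.subset.trans Set.inter_subset_right
  -- the intersection of a member with its commutant is the scalars
  have hinter_compl : ∀ a ∈ F.mem, (a : Set (H →L[ℂ] H)) ∩ (a.commutant : Set (H →L[ℂ] H)) = Sc := by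
    intro a ha
    refine Set.Subset.antisymm ?_ (Set.subset_inter (scalars_mem_vn a) (scalars_mem_vn a.commutant))
    have h1 : (a : Set (H →L[ℂ] H)) ∩ (a.commutant : Set (H →L[ℂ] H)) ⊆
        Set.centralizer ((a : Set (H →L[ℂ] H)) ∪ (a.commutant : Set (H →L[ℂ] H))) := by
      rintro T ⟨hTa, hTa'⟩ g hg
      rcases hg with hga | hga'
      · exact (VonNeumannAlgebra.mem_commutant_iff.1 hTa' g hga)
      · exact (VonNeumannAlgebra.mem_commutant_iff.1 hga' T hTa).symm
    have h2 : Set.centralizer ((a : Set (H →L[ℂ] H)) ∪ (a.commutant : Set (H →L[ℂ] H))) = Sc := by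
      have h3 : Set.centralizer (Set.centralizer (Set.centralizer
          ((a : Set (H →L[ℂ] H)) ∪ (a.commutant : Set (H →L[ℂ] H)))))
          = Set.centralizer Set.univ := by rw [F.factor a ha]
      rwa [Set.centralizer_centralizer_centralizer, centralizer_univ_eq_scalars Ω hΩ] at h3
    exact h1.trans h2.subset
  -- PART 1 : countable chain condition
  have part1 : ∀ A : Set (VonNeumannAlgebra H), A ⊆ F.mem →
      (∀ a ∈ A, (a : Set (H →L[ℂ] H)) ≠ Sc) →
      (∀ a ∈ A, ∀ b ∈ A, a ≠ b → (a : Set (H →L[ℂ] H)) ∩ (b : Set (H →L[ℂ] H)) = Sc) →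
      A.Countable := by
    intro A hA hA0 hAd
    -- choose witnesses
    have hchoice : ∀ a : {a // a ∈ A}, ∃ X : H →L[ℂ] H, X ∈ (a : VonNeumannAlgebra H) ∧
        X Ω ≠ ⟪Ω, X Ω⟫ • Ω := by
      rintro ⟨a, ha⟩
      by_contra hcon
      push_neg at hcon
      have : ∀ X ∈ a, X Ω = ⟪Ω, X Ω⟫ • Ω := fun X hX => hcon X hX
      exact hA0 a ha (vn_trivial a Ω hΩ (F.factor a (hA ha)) this)
    choose Xf hXf1 hXf2 using hchoice
    set v : {a // a ∈ A} → H := fun a => Xf a Ω - ⟪Ω, Xf a Ω⟫ • Ω with hv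
    have hvne : ∀ a, v a ≠ 0 := fun a => sub_ne_zero.2 (hXf2 a)
    set e : {a // a ∈ A} → H := fun a => ((‖v a‖ : ℂ))⁻¹ • v a with he
    have hnorm : ∀ a, ‖e a‖ = 1 := by
      intro a
      rw [he]
      simp only [norm_smul, norm_inv, Complex.norm_real, Real.norm_eq_abs,
        abs_of_nonneg (norm_nonneg (v a))]
      field_simp [norm_ne_zero_iff.2 (hvne a)]
    have horth : ∀ a b : {a // a ∈ A}, a ≠ b → ⟪e a, e b⟫ = 0 := by
      intro a b hab
      have hab' : (a : VonNeumannAlgebra H) ≠ (b : VonNeumannAlgebra H) := by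
        intro hcon; exact hab (Subtype.ext hcon)
      have hbsub : ((b : VonNeumannAlgebra H) : Set (H →L[ℂ] H)) ⊆
          (((a : VonNeumannAlgebra H)).commutant : Set (H →L[ℂ] H)) :=
        hsub_commutant _ (hA a.2) _ (hA b.2) (hAd _ a.2 _ b.2 hab')
      have hXb : Xf b ∈ (a : VonNeumannAlgebra H).commutant := hbsub (hXf1 b)
      have hstar : ContinuousLinearMap.adjoint (Xf a) ∈ (a : VonNeumannAlgebra H) := by
        rw [← ContinuousLinearMap.star_eq_adjoint]; exact star_mem (hXf1 a)
      have hind := F.indep _ (hA a.2) _ hstar _ hXb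
      have h0 : ⟪v a, v b⟫ = 0 := by
        apply inner_centered_eq_zero Ω hΩ
        exact hind
      rw [he]
      simp only [inner_smul_left, inner_smul_right, h0]
      ring
    -- pairwise orthogonal unit vectors are 1-separated
    have hdist : ∀ a b : {a // a ∈ A}, a ≠ b → (1 : ℝ) ≤ dist (e a) (e b) := by
      intro a b hab
      have h2 : ‖e a - e b‖ ^ 2 = 2 := by
        rw [@norm_sub_sq ℂ]
        rw [horth a b hab]
        simp only [hnorm a, hnorm b, map_zero]
        norm_num
      have hge : (0:ℝ) ≤ ‖e a - e b‖ := norm_nonneg _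
      rw [dist_eq_norm]
      nlinarith
    have hCount : Countable {a // a ∈ A} := by
      apply Pairwise.countable_of_isOpen_disjoint
        (s := fun a : {a // a ∈ A} => Metric.ball (e a) (1/2))
      · intro a b hab
        refine Metric.ball_disjoint_ball ?_
        have := hdist a b hab
        linarith
      · intro a; exact Metric.isOpen_ball
      · intro a; exact Metric.nonempty_ball.2 (by norm_num)
    exact Set.countable_coe_iff.1 hCount
  -- countable joins exist
  have countable_join : ∀ M : Set (VonNeumannAlgebra H), M ⊆ F.mem → M.Countable →
      M.Nonempty → ∃ z ∈ F.mem, (z : Set (H →L[ℂ] H)) =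
        Set.centralizer (Set.centralizer (⋃ a ∈ M, ((a : Set (H →L[ℂ] H))))) := by
    intro M hM hMc hMne
    obtain ⟨f, rfl⟩ := hMc.exists_eq_range hMne
    have hf : ∀ n, f n ∈ F.mem := fun n => hM ⟨n, rfl⟩
    have hstep : ∀ y : {z : VonNeumannAlgebra H // z ∈ F.mem}, ∀ n : ℕ,
        ∃ z : {z : VonNeumannAlgebra H // z ∈ F.mem},
        (z.1 : Set (H →L[ℂ] H)) = Set.centralizer (Set.centralizer
          ((y.1 : Set (H →L[ℂ] H)) ∪ ((f n : Set (H →L[ℂ] H))))) := by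
      intro y n
      obtain ⟨z, hz, hzeq⟩ := F.sup_mem y.1 y.2 (f n) (hf n)
      exact ⟨⟨z, hz⟩, hzeq⟩
    choose g hg using hstep
    set y : ℕ → {z : VonNeumannAlgebra H // z ∈ F.mem} :=
      fun n => Nat.rec ⟨f 0, hf 0⟩ (fun n ih => g ih (n + 1)) n with hy
    have hysucc : ∀ n, y (n + 1) = g (y n) (n + 1) := fun n => rfl
    have hmono : Monotone fun n => (((y n).1 : Set (H →L[ℂ] H))) := by
      apply monotone_nat_of_le_succ
      intro n
      show ((y n).1 : Set (H →L[ℂ] H)) ⊆ ((y (n+1)).1 : Set (H →L[ℂ] H))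
      rw [hysucc, hg]
      exact Set.subset_union_left.trans Set.subset_centralizer_centralizer
    have hfy : ∀ n, ((f n : Set (H →L[ℂ] H))) ⊆ ((y n).1 : Set (H →L[ℂ] H)) := by
      intro n
      cases n with
      | zero => exact subset_rfl
      | succ m =>
        rw [hysucc, hg]
        exact Set.subset_union_right.trans Set.subset_centralizer_centralizer
    have hyb : ∀ n, ((y n).1 : Set (H →L[ℂ] H)) ⊆
        Set.centralizer (Set.centralizer (⋃ m, ((f m : Set (H →L[ℂ] H))))) := by
      intro n
      induction n with
      | zero =>
        exact (Set.subset_iUnion (fun m => ((f m : Set (H →L[ℂ] H)))) 0).trans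
          Set.subset_centralizer_centralizer
      | succ m ih =>
        rw [hysucc, hg]
        have h1 : ((y m).1 : Set (H →L[ℂ] H)) ∪ ((f (m+1) : Set (H →L[ℂ] H))) ⊆
            Set.centralizer (Set.centralizer (⋃ k, ((f k : Set (H →L[ℂ] H))))) :=
          Set.union_subset ih ((Set.subset_iUnion
            (fun k => ((f k : Set (H →L[ℂ] H)))) (m+1)).trans
            Set.subset_centralizer_centralizer)
        calc Set.centralizer (Set.centralizer
              (((y m).1 : Set (H →L[ℂ] H)) ∪ ((f (m+1) : Set (H →L[ℂ] H)))))
            ⊆ Set.centralizer (Set.centralizer (Set.centralizer (Set.centralizer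
              (⋃ k, ((f k : Set (H →L[ℂ] H))))))) := cc_mono h1
          _ = Set.centralizer (Set.centralizer (⋃ k, ((f k : Set (H →L[ℂ] H))))) := cc_cc _
    obtain ⟨z, hz, hzeq⟩ := hseq (fun n => (y n).1) (fun n => (y n).2) hmono
    refine ⟨z, hz, ?_⟩
    rw [hzeq, Set.biUnion_range]
    apply cc_eq_of_between
    · exact Set.iUnion_mono fun n => hfy n
    · exact Set.iUnion_subset fun n => hyb n
  refine ⟨fun A hA hA0 hAd => part1 A hA hA0 hAd, ?_⟩
  -- PART 2 : arbitrary joins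
  intro X hX
  set U : Set (H →L[ℂ] H) :=
    Set.centralizer (Set.centralizer (⋃ x ∈ X, ((x : Set (H →L[ℂ] H))))) with hU
  have hUcc : Set.centralizer (Set.centralizer U) = U := by
    rw [hU, cc_cc]
  have hxU : ∀ x ∈ X, (x : Set (H →L[ℂ] H)) ⊆ U := by
    intro x hx
    exact (Set.subset_biUnion_of_mem hx).trans Set.subset_centralizer_centralizer
  -- the scalar algebra is a member
  obtain ⟨x₀, hx₀⟩ := F.nonempty
  obtain ⟨z₀, hz₀, hz₀eq⟩ := F.inf_mem x₀ hx₀ x₀.commutant (F.compl_mem x₀ hx₀)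
  have hz₀Sc : (z₀ : Set (H →L[ℂ] H)) = Sc := by rw [hz₀eq]; exact hinter_compl x₀ hx₀
  -- Zorn: a maximal antichain below U
  set 𝒜 : Set (Set (VonNeumannAlgebra H)) :=
    {A | A ⊆ F.mem ∧ (∀ a ∈ A, (a : Set (H →L[ℂ] H)) ⊆ U) ∧
      (∀ a ∈ A, (a : Set (H →L[ℂ] H)) ≠ Sc) ∧
      ∀ a ∈ A, ∀ b ∈ A, a ≠ b → (a : Set (H →L[ℂ] H)) ∩ (b : Set (H →L[ℂ] H)) = Sc} with h𝒜
  obtain ⟨M, hM𝒜, hMmax⟩ : ∃ M, Maximal (· ∈ 𝒜) M := by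
    apply zorn_subset
    intro c hc hchain
    refine ⟨⋃₀ c, ⟨?_, ?_, ?_, ?_⟩, fun s hs => Set.subset_sUnion_of_mem hs⟩
    · exact Set.sUnion_subset fun A hA => (hc hA).1
    · rintro a ⟨A, hA, haA⟩; exact (hc hA).2.1 a haA
    · rintro a ⟨A, hA, haA⟩; exact (hc hA).2.2.1 a haA
    · rintro a ⟨A, hA, haA⟩ b ⟨B, hB, hbB⟩ hab
      rcases hchain.total hA hB with h | h
      · exact (hc hB).2.2.2 a (h haA) b hbB hab
      · exact (hc hA).2.2.2 a haA b (h hbB) hab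
  obtain ⟨hMmem, hMU, hM0, hMd⟩ := hM𝒜
  have hMc : M.Countable := part1 M hMmem hM0 hMd
  -- key step: given the join `z` of `M`, every `x ∈ X` is contained in it
  have key : ∀ z ∈ F.mem, (z : Set (H →L[ℂ] H)) =
      Set.centralizer (Set.centralizer (⋃ a ∈ M, ((a : Set (H →L[ℂ] H))))) →
      ∀ x ∈ X, (x : Set (H →L[ℂ] H)) ⊆ (z : Set (H →L[ℂ] H)) := by
    intro z hz hzeq x hx
    have hz' := F.compl_mem z hz
    obtain ⟨b, hb, hbeq⟩ := F.inf_mem x (hX hx) z.commutant hz'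
    by_cases hbSc : (b : Set (H →L[ℂ] H)) = Sc
    · -- then x ≤ z by distributivity
      obtain ⟨w, hw, hweq⟩ := F.inf_mem x (hX hx) z hz
      have hd := F.distrib x (hX hx) z hz z.commutant hz'
      rw [F.factor z hz, ← hbeq, hbSc] at hd
      have hScsub : Sc ⊆ (x : Set (H →L[ℂ] H)) ∩ (z : Set (H →L[ℂ] H)) :=
        Set.subset_inter (scalars_mem_vn x) (scalars_mem_vn z)
      rw [Set.union_eq_self_of_subset_right hScsub, ← hweq, w.centralizer_centralizer,
        Set.inter_univ] at hd
      rw [hweq] at hd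
      exact hd.subset.trans Set.inter_subset_right
    · -- contradiction with maximality
      exfalso
      have hbU : (b : Set (H →L[ℂ] H)) ⊆ U := by
        rw [hbeq]
        exact Set.inter_subset_left.trans (hxU x hx)
      have hbz' : (b : Set (H →L[ℂ] H)) ⊆ (z.commutant : Set (H →L[ℂ] H)) := by
        rw [hbeq]; exact Set.inter_subset_right
      have haz : ∀ a ∈ M, (a : Set (H →L[ℂ] H)) ⊆ (z : Set (H →L[ℂ] H)) := by
        intro a ha
        rw [hzeq]
        exact (Set.subset_biUnion_of_mem ha).trans Set.subset_centralizer_centralizer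
      have hbM : b ∉ M := by
        intro hbM
        apply hbSc
        refine Set.Subset.antisymm ?_ (scalars_mem_vn b)
        have : (b : Set (H →L[ℂ] H)) ⊆ (z : Set (H →L[ℂ] H)) ∩ (z.commutant : Set (H →L[ℂ] H)) :=
          Set.subset_inter (haz b hbM) hbz'
        exact this.trans (hinter_compl z hz).subset
      have hdisj : ∀ a ∈ M, (a : Set (H →L[ℂ] H)) ∩ (b : Set (H →L[ℂ] H)) = Sc := by
        intro a ha
        refine Set.Subset.antisymm ?_
          (Set.subset_inter (scalars_mem_vn a) (scalars_mem_vn b))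
        have : (a : Set (H →L[ℂ] H)) ∩ (b : Set (H →L[ℂ] H)) ⊆
            (z : Set (H →L[ℂ] H)) ∩ (z.commutant : Set (H →L[ℂ] H)) :=
          Set.inter_subset_inter (haz a ha) hbz'
        exact this.trans (hinter_compl z hz).subset
      have hins : insert b M ∈ 𝒜 := by
        refine ⟨Set.insert_subset hb hMmem, ?_, ?_, ?_⟩
        · rintro a (rfl | ha)
          · exact hbU
          · exact hMU a ha
        · rintro a (rfl | ha)
          · exact hbSc
          · exact hM0 a ha
        · rintro a (rfl | ha) c (rfl | hc) hac
          · exact absurd rfl hac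
          · rw [Set.inter_comm]; exact hdisj c hc
          · exact hdisj a ha
          · exact hMd a ha c hc hac
      have := hMmax hins (Set.subset_insert b M)
      exact hbM (this (Set.mem_insert b M))
  rcases Set.eq_empty_or_nonempty M with hMe | hMne
  · -- M empty : every x ∈ X is scalar, and the join is the scalar algebra
    have hallSc : ∀ x ∈ X, (x : Set (H →L[ℂ] H)) = Sc := by
      intro x hx
      by_contra hxSc
      have hins : {x} ∈ 𝒜 := by
        refine ⟨Set.singleton_subset_iff.2 (hX hx), ?_, ?_, ?_⟩
        · rintro a rfl; exact hxU _ hx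
        · rintro a rfl; exact hxSc
        · rintro a rfl b rfl hab; exact absurd rfl hab
      have hsub : M ⊆ {x} := by rw [hMe]; exact Set.empty_subset _
      have h5 := hMmax hins hsub
      rw [hMe] at h5
      exact h5 (Set.mem_singleton x)
    refine ⟨z₀, hz₀, ?_⟩
    rw [hz₀Sc]
    refine Set.Subset.antisymm (scalars_mem_centralizer _) ?_
    have hsub : (⋃ x ∈ X, ((x : Set (H →L[ℂ] H)))) ⊆ Sc :=
      Set.iUnion₂_subset fun x hx => (hallSc x hx).subset
    calc Set.centralizer (Set.centralizer (⋃ x ∈ X, ((x : Set (H →L[ℂ] H)))))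
        ⊆ Set.centralizer (Set.centralizer Sc) := cc_mono hsub
      _ = Sc := by rw [← hz₀Sc, z₀.centralizer_centralizer]
  · obtain ⟨z, hz, hzeq⟩ := countable_join M hMmem hMc hMne
    refine ⟨z, hz, ?_⟩
    have h1 : (z : Set (H →L[ℂ] H)) ⊆ U := by
      rw [hzeq, ← hUcc]
      apply cc_mono
      exact Set.iUnion₂_subset fun a ha => hMU a ha
    have h2 : ⋃ x ∈ X, ((x : Set (H →L[ℂ] H))) ⊆ (z : Set (H →L[ℂ] H)) :=
      Set.iUnion₂_subset fun x hx => key z hz hzeq x hx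
    refine Set.Subset.antisymm h1 ?_
    rw [hU] at h1 ⊢
    calc Set.centralizer (Set.centralizer (⋃ x ∈ X, ((x : Set (H →L[ℂ] H)))))
        ⊆ Set.centralizer (Set.centralizer ((z : Set (H →L[ℂ] H)))) := cc_mono h2
      _ = (z : Set (H →L[ℂ] H)) := z.centralizer_centralizer
end

section
/- Let g : ℕ → ℂ be absolutely summable with ∑_n |1 − a_n| < ∞ where a_n ∈ ℂ, and suppose 0 < ∏_n |a_n| (the infinite product of the |a_n| converges to a nonzero limit). Let (v_F)_{F finite ⊆ ℕ} be a net in a Hilbert space with ‖v_F − v_G‖² = (∏_{f∈F} c_f)·((−1 + ∏_{f∈G∖F} c_f) + 2Re(1 − ∏_{f∈G∖F} a_f)) for F ⊆ G, where c_f = ‖χ_f‖² ≤ 1 and a_f = ⟨ζ_f, χ_f⟩ with ∑_f(1 − c_f) < ∞ and ∑_f |1 − a_f| < ∞. Then (v_F) is Cauchy along the net of finite subsets ordered by inclusion, hence converges. -/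
open Filter
open scoped ComplexInnerProductSpace

lemma norm_one_sub_prod_le (s : Finset ℕ) (a : ℕ → ℂ) (h : ∀ i, ‖a i‖ ≤ 1) :
    ‖1 - ∏ i ∈ s, a i‖ ≤ ∑ i ∈ s, ‖1 - a i‖ := by
  induction s using Finset.cons_induction with
  | empty => simp
  | cons i s hi ih =>
    rw [Finset.prod_cons, Finset.sum_cons]
    have : (1 : ℂ) - a i * ∏ j ∈ s, a j = (1 - a i) + a i * (1 - ∏ j ∈ s, a j) := by ring
    rw [this]
    calc ‖(1 - a i) + a i * (1 - ∏ j ∈ s, a j)‖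
        ≤ ‖1 - a i‖ + ‖a i * (1 - ∏ j ∈ s, a j)‖ := norm_add_le _ _
      _ ≤ ‖1 - a i‖ + ∑ j ∈ s, ‖1 - a j‖ := by
          gcongr
          rw [norm_mul]
          calc ‖a i‖ * ‖1 - ∏ j ∈ s, a j‖ ≤ 1 * ‖1 - ∏ j ∈ s, a j‖ := by
                gcongr; exact h i
            _ = ‖1 - ∏ j ∈ s, a j‖ := one_mul _
            _ ≤ _ := ih

lemma one_sub_prod_le_real (s : Finset ℕ) (b : ℕ → ℝ) (h0 : ∀ i, 0 ≤ b i)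
    (h1 : ∀ i, b i ≤ 1) : 1 - ∏ i ∈ s, b i ≤ ∑ i ∈ s, (1 - b i) := by
  induction s using Finset.cons_induction with
  | empty => simp
  | cons i s hi ih =>
    rw [Finset.prod_cons, Finset.sum_cons]
    have hP0 : 0 ≤ ∏ j ∈ s, b j := Finset.prod_nonneg fun j _ => h0 j
    have hP1 : ∏ j ∈ s, b j ≤ 1 := Finset.prod_le_one (fun j _ => h0 j) (fun j _ => h1 j)
    nlinarith [h0 i, h1 i]

/-- Convergence of the net defining an infinite tensor product of vectors: given unit vectors
`ζ_f` and vectors `χ_f` with `‖χ_f‖ ≤ 1`, `∑_f (1 − ‖χ_f‖²) < ∞`, `∑_f |1 − ⟪ζ_f, χ_f⟫| < ∞`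
and `∏_f |⟪ζ_f, χ_f⟫| > 0`, any net `(v_F)` over finite subsets of `ℕ` whose increments
satisfy the displayed identity is Cauchy, hence convergent. -/
theorem tensor_net_converges {H : Type*} [NormedAddCommGroup H] [InnerProductSpace ℂ H]
    [CompleteSpace H]
    (ζ χ : ℕ → H) (hζ : ∀ f, ‖ζ f‖ = 1) (hχ : ∀ f, ‖χ f‖ ≤ 1)
    (hsumc : Summable fun f => 1 - ‖χ f‖ ^ 2)
    (hsuma : Summable fun f => ‖1 - ⟪ζ f, χ f⟫‖)
    (hprod : 0 < ∏' f : ℕ, ‖⟪ζ f, χ f⟫‖)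
    (v : Finset ℕ → H)
    (hv : ∀ F G : Finset ℕ, F ⊆ G →
      ‖v F - v G‖ ^ 2 =
        (∏ f ∈ F, ‖χ f‖ ^ 2) *
          ((-1 + ∏ f ∈ G \ F, ‖χ f‖ ^ 2) +
            2 * (1 - ∏ f ∈ G \ F, ⟪ζ f, χ f⟫).re)) :
    ∃ w : H, Tendsto v atTop (nhds w) := by
  have hc0 : ∀ f, (0:ℝ) ≤ ‖χ f‖ ^ 2 := fun f => by positivity
  have hc1 : ∀ f, ‖χ f‖ ^ 2 ≤ 1 := fun f =>
    pow_le_one₀ (norm_nonneg _) (hχ f)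
  have ha1 : ∀ f, ‖⟪ζ f, χ f⟫‖ ≤ 1 := fun f => by
    calc ‖⟪ζ f, χ f⟫‖ ≤ ‖ζ f‖ * ‖χ f‖ := norm_inner_le_norm _ _
      _ ≤ 1 * 1 := by
          have := hχ f
          have := hζ f
          gcongr <;> simp [hζ f, hχ f]
      _ = 1 := one_mul 1
  suffices h : CauchySeq v from cauchySeq_tendsto_of_complete h
  rw [Metric.cauchySeq_iff']
  intro ε hε
  set δ : ℝ := ε ^ 2 / 4 with hδdef
  have hδ : 0 < δ := by positivity
  obtain ⟨s₁, hs₁⟩ := hsumc.vanishing (Metric.ball_mem_nhds 0 hδ)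
  obtain ⟨s₂, hs₂⟩ := hsuma.vanishing (Metric.ball_mem_nhds 0 hδ)
  refine ⟨s₁ ∪ s₂, fun G hG => ?_⟩
  set F₀ : Finset ℕ := s₁ ∪ s₂
  set D : Finset ℕ := G \ F₀ with hD
  have hdisj : ∀ s : Finset ℕ, s ⊆ F₀ → Disjoint D s := by
    intro s hs
    exact (Finset.sdiff_disjoint).mono_right hs
  -- tail sum bounds
  have hsum1 : ∑ f ∈ D, (1 - ‖χ f‖ ^ 2) < δ := by
    have := hs₁ D (hdisj s₁ Finset.subset_union_left)
    rw [Metric.mem_ball, Real.dist_eq, sub_zero] at this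
    exact lt_of_le_of_lt (le_abs_self _) this
  have hsum2 : ∑ f ∈ D, ‖1 - ⟪ζ f, χ f⟫‖ < δ := by
    have := hs₂ D (hdisj s₂ Finset.subset_union_right)
    rw [Metric.mem_ball, Real.dist_eq, sub_zero] at this
    exact lt_of_le_of_lt (le_abs_self _) this
  -- product bounds
  have hPc0 : (0:ℝ) ≤ ∏ f ∈ F₀, ‖χ f‖ ^ 2 := Finset.prod_nonneg fun f _ => hc0 f
  have hPc1 : ∏ f ∈ F₀, ‖χ f‖ ^ 2 ≤ 1 :=
    Finset.prod_le_one (fun f _ => hc0 f) (fun f _ => hc1 f)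
  have hPd0 : (0:ℝ) ≤ ∏ f ∈ D, ‖χ f‖ ^ 2 := Finset.prod_nonneg fun f _ => hc0 f
  have hPd1 : ∏ f ∈ D, ‖χ f‖ ^ 2 ≤ 1 :=
    Finset.prod_le_one (fun f _ => hc0 f) (fun f _ => hc1 f)
  have hPd : 1 - ∏ f ∈ D, ‖χ f‖ ^ 2 < δ :=
    lt_of_le_of_lt (one_sub_prod_le_real D _ hc0 hc1) hsum1
  have hPa : ‖1 - ∏ f ∈ D, ⟪ζ f, χ f⟫‖ < δ :=
    lt_of_le_of_lt (norm_one_sub_prod_le D _ ha1) hsum2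
  have hRe : |(1 - ∏ f ∈ D, ⟪ζ f, χ f⟫).re| < δ :=
    lt_of_le_of_lt (Complex.abs_re_le_norm _) hPa
  have hRe' : (1 - ∏ f ∈ D, ⟪ζ f, χ f⟫).re < δ := lt_of_le_of_lt (le_abs_self _) hRe
  have hRe'' : -δ < (1 - ∏ f ∈ D, ⟪ζ f, χ f⟫).re := neg_lt_of_abs_lt hRe
  -- norm estimate
  have hkey := hv F₀ G hG
  rw [← hD] at hkey
  have hsq : ‖v F₀ - v G‖ ^ 2 < ε ^ 2 := by
    rw [hkey]
    have hnn : (0:ℝ) ≤ ‖v F₀ - v G‖ ^ 2 := by positivity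
    rw [hkey] at hnn
    nlinarith [hPc0, hPc1, hPd, hPd1, hRe', hRe'']
  have hnorm : ‖v F₀ - v G‖ < ε :=
    lt_of_pow_lt_pow_left₀ 2 hε.le hsq
  rw [dist_eq_norm, ← norm_neg]
  simpa [neg_sub] using hnorm
end

section
/- Let μ be a σ-finite measure, (S_x)_{x∈B} a family of measurable sets indexed by a Boolean algebra B with S_{x∧y} = S_x ∩ S_y a.e.-μ, and for a finite Boolean subalgebra b with atom set at(b) define K_b := ∑_{a∈at(b)} 1_{S∖S_{a'}} where a' is the complement of a in B. If b₁ ⊆ b₂ are finite Boolean subalgebras then K_{b₁} ≤ K_{b₂} a.e.-μ. -/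
open scoped Classical
open MeasureTheory

section Aux

variable {B : Type*} [BooleanAlgebra B]

/-- In a finite set, every nonzero element has a "relative atom" below it. -/
lemma cmm_exists_atom_le (b : Finset B) {w : B} (hw : w ∈ b) (hwne : w ≠ ⊥) :
    ∃ a ∈ b, (a ≠ ⊥ ∧ ∀ c ∈ b, c ≤ a → c = ⊥ ∨ c = a) ∧ a ≤ w := by
  have hne : (b.filter (fun c => c ≠ ⊥ ∧ c ≤ w)).Nonempty :=
    ⟨w, Finset.mem_filter.2 ⟨hw, hwne, le_rfl⟩⟩
  obtain ⟨a, ha, hmin'⟩ := Set.Finite.exists_minimal (Finset.finite_toSet _) (Finset.coe_nonempty.2 hne)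
  have hmin : ∀ x ∈ b.filter (fun c => c ≠ ⊥ ∧ c ≤ w), ¬ x < a :=
    fun x hx hlt => hlt.not_ge (hmin' (Finset.mem_coe.2 hx) hlt.le)
  rw [Finset.mem_coe] at ha
  rw [Finset.mem_filter] at ha
  refine ⟨a, ha.1, ⟨ha.2.1, ?_⟩, ha.2.2⟩
  intro c hc hca
  by_cases hcb : c = ⊥
  · exact Or.inl hcb
  · refine Or.inr ?_
    by_contra hne'
    exact hmin c (Finset.mem_filter.2 ⟨hc, hcb, hca.trans ha.2.2⟩)
      (lt_of_le_of_ne hca hne')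

lemma cmm_sup_mem (b : Finset B) (hbot : (⊥ : B) ∈ b)
    (hsup : ∀ u ∈ b, ∀ v ∈ b, u ⊔ v ∈ b) :
    ∀ t : Finset B, ↑t ⊆ (b : Set B) → t.sup id ∈ b := by
  intro t
  induction t using Finset.induction_on with
  | empty => intro _; simpa using hbot
  | insert a t hnot ih =>
    intro hts
    rw [Finset.coe_insert, Set.insert_subset_iff] at hts
    rw [Finset.sup_insert]
    exact hsup a hts.1 _ (ih hts.2)

/-- Every element of a finite Boolean subalgebra is the sup of the atoms below it. -/
lemma cmm_eq_sup_atoms (b : Finset B) (hbot : (⊥ : B) ∈ b)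
    (hcompl : ∀ u ∈ b, uᶜ ∈ b) (hinf : ∀ u ∈ b, ∀ v ∈ b, u ⊓ v ∈ b)
    (hsup : ∀ u ∈ b, ∀ v ∈ b, u ⊔ v ∈ b) {u : B} (hu : u ∈ b) :
    u = (b.filter (fun a => (a ≠ ⊥ ∧ ∀ c ∈ b, c ≤ a → c = ⊥ ∨ c = a) ∧ a ≤ u)).sup id := by
  set t := b.filter (fun a => (a ≠ ⊥ ∧ ∀ c ∈ b, c ≤ a → c = ⊥ ∨ c = a) ∧ a ≤ u) with ht
  have htb : ↑t ⊆ (b : Set B) := by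
    rw [ht]; exact Finset.coe_subset.2 (Finset.filter_subset _ _)
  have hv : t.sup id ∈ b := cmm_sup_mem b hbot hsup t htb
  have hvu : t.sup id ≤ u := Finset.sup_le fun a ha => (Finset.mem_filter.1 ha).2.2
  refine le_antisymm ?_ hvu
  have hw : u ⊓ (t.sup id)ᶜ ∈ b := hinf u hu _ (hcompl _ hv)
  by_cases hwb : u ⊓ (t.sup id)ᶜ = ⊥
  · have : u \ t.sup id = ⊥ := by rwa [sdiff_eq]
    exact sdiff_eq_bot_iff.1 this
  · exfalso
    obtain ⟨a, hab, haat, haw⟩ := cmm_exists_atom_le b hw hwb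
    have hav : a ≤ t.sup id := by
      have : a ∈ t := Finset.mem_filter.2 ⟨hab, haat, haw.trans inf_le_left⟩
      exact Finset.le_sup (f := id) this
    have hav' : a ≤ (t.sup id)ᶜ := haw.trans inf_le_right
    exact haat.1 (le_bot_iff.1 ((inf_compl_eq_bot : t.sup id ⊓ (t.sup id)ᶜ = ⊥) ▸ le_inf hav hav'))

lemma cmm_compl_sup (t : Finset B) :
    (t.sup id)ᶜ = t.inf (fun a => aᶜ) := by
  induction t using Finset.induction_on with
  | empty => simp
  | insert a t hnot ih => simp [compl_sup, ih]

end Aux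

lemma cmm_S_inf {B : Type*} [BooleanAlgebra B] {X : Type*} [MeasurableSpace X]
    (μ : MeasureTheory.Measure X) (S : B → Set X)
    (hStop : S ⊤ = Set.univ)
    (hSinf : ∀ b c : B, S (b ⊓ c) =ᵐ[μ] ((S b ∩ S c : Set X)))
    (t : Finset B) (f : B → B) :
    S (t.inf f) =ᵐ[μ] ⋂ i ∈ t, S (f i) := by
  induction t using Finset.induction_on with
  | empty => simp [hStop]
  | insert a t hnot ih =>
    rw [Finset.inf_insert]
    refine (hSinf _ _).trans ?_
    have : (S (f a) ∩ S (t.inf f) : Set X) =ᵐ[μ] (S (f a) ∩ ⋂ i ∈ t, S (f i) : Set X) :=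
      Filter.EventuallyEq.inter (Filter.EventuallyEq.refl _ _) ih
    refine this.trans ?_
    rw [Finset.set_biInter_insert]
    exact Filter.EventuallyEq.rfl

/-- Monotonicity of the counting functions `K_b`: given spectral sets `(S_x)_{x ∈ B}` with
`S_{x∧y} = S_x ∩ S_y` a.e.-`μ`, and finite Boolean subalgebras `b₁ ⊆ b₂`, the counts
`K_b = ∑_{a ∈ at(b)} 1_{S ∖ S_{aᶜ}}` satisfy `K_{b₁} ≤ K_{b₂}` a.e.-`μ`. -/
theorem counting_map_mono {B : Type*} [BooleanAlgebra B] {X : Type*} [MeasurableSpace X]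
    (μ : MeasureTheory.Measure X) [MeasureTheory.SigmaFinite μ]
    (S : B → Set X) (hSmeas : ∀ b, MeasurableSet (S b))
    (hStop : S ⊤ = Set.univ)
    (hSinf : ∀ b c : B, S (b ⊓ c) =ᵐ[μ] ((S b ∩ S c : Set X)))
    (b₁ b₂ : Finset B)
    (h₁ : ⊥ ∈ b₁ ∧ ⊤ ∈ b₁ ∧ (∀ u ∈ b₁, uᶜ ∈ b₁) ∧ (∀ u ∈ b₁, ∀ v ∈ b₁, u ⊓ v ∈ b₁) ∧
      (∀ u ∈ b₁, ∀ v ∈ b₁, u ⊔ v ∈ b₁))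
    (h₂ : ⊥ ∈ b₂ ∧ ⊤ ∈ b₂ ∧ (∀ u ∈ b₂, uᶜ ∈ b₂) ∧ (∀ u ∈ b₂, ∀ v ∈ b₂, u ⊓ v ∈ b₂) ∧
      (∀ u ∈ b₂, ∀ v ∈ b₂, u ⊔ v ∈ b₂))
    (hsub : b₁ ⊆ b₂) :
    ∀ᵐ s ∂μ,
      (∑ a ∈ b₁.filter (fun a => a ≠ ⊥ ∧ ∀ c ∈ b₁, c ≤ a → c = ⊥ ∨ c = a),
          (Set.univ \ S (aᶜ)).indicator (fun _ => (1 : ℕ)) s)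
        ≤ ∑ a ∈ b₂.filter (fun a => a ≠ ⊥ ∧ ∀ c ∈ b₂, c ≤ a → c = ⊥ ∨ c = a),
            (Set.univ \ S (aᶜ)).indicator (fun _ => (1 : ℕ)) s := by
  obtain ⟨hb1bot, hb1top, hb1c, hb1i, hb1s⟩ := h₁
  obtain ⟨hb2bot, hb2top, hb2c, hb2i, hb2s⟩ := h₂
  set At₁ := b₁.filter (fun a => a ≠ ⊥ ∧ ∀ c ∈ b₁, c ≤ a → c = ⊥ ∨ c = a) with hAt1
  set At₂ := b₂.filter (fun a => a ≠ ⊥ ∧ ∀ c ∈ b₂, c ≤ a → c = ⊥ ∨ c = a) with hAt2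
  -- the set of `b₂`-atoms below `a`
  set T : B → Finset B := fun a =>
    b₂.filter (fun c => (c ≠ ⊥ ∧ ∀ d ∈ b₂, d ≤ c → d = ⊥ ∨ d = c) ∧ c ≤ a) with hT
  -- a.e., for every atom `a` of `b₁`, `S (aᶜ)` equals the intersection of the `S (cᶜ)`
  have key : ∀ a ∈ At₁, S (aᶜ) =ᵐ[μ] ⋂ c ∈ T a, S (cᶜ) := by
    intro a ha
    have hab2 : a ∈ b₂ := hsub (Finset.mem_filter.1 ha).1
    have hrepr : a = (T a).sup id :=
      cmm_eq_sup_atoms b₂ hb2bot hb2c hb2i hb2s hab2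
    have hcompl : aᶜ = (T a).inf (fun c => cᶜ) := by
      rw [← cmm_compl_sup, ← hrepr]
    rw [hcompl]
    exact cmm_S_inf μ S hStop hSinf (T a) _
  have hae : ∀ᵐ s ∂μ, ∀ a ∈ (At₁ : Set B), s ∈ S (aᶜ) ↔ s ∈ ⋂ c ∈ T a, S (cᶜ) := by
    rw [MeasureTheory.ae_ball_iff At₁.countable_toSet]
    intro a ha
    have := key a (by simpa using ha)
    filter_upwards [this] with s hs
    exact iff_of_eq hs
  filter_upwards [hae] with s hs
  -- rewrite both sums as cardinalities
  have hsum : ∀ (t : Finset B),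
      (∑ a ∈ t, (Set.univ \ S (aᶜ)).indicator (fun _ => (1 : ℕ)) s)
        = (t.filter (fun a => s ∉ S (aᶜ))).card := by
    intro t
    rw [Finset.card_filter]
    refine Finset.sum_congr rfl fun a _ => ?_
    by_cases h : s ∈ S (aᶜ) <;> simp [Set.indicator_apply, Set.mem_diff, h]
  rw [hsum, hsum]
  -- build an injection from counted atoms of `b₁` into counted atoms of `b₂`
  have hex : ∀ a ∈ At₁.filter (fun a => s ∉ S (aᶜ)),
      ∃ c, c ∈ At₂ ∧ c ≤ a ∧ s ∉ S (cᶜ) := by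
    intro a ha
    rw [Finset.mem_filter] at ha
    have hiff := hs a (by simpa using ha.1)
    have : s ∉ ⋂ c ∈ T a, S (cᶜ) := fun h => ha.2 (hiff.2 h)
    rw [Set.mem_iInter₂] at this
    push_neg at this
    obtain ⟨c, hcT, hcs⟩ := this
    rw [hT] at hcT
    simp only [Finset.mem_filter] at hcT
    exact ⟨c, Finset.mem_filter.2 ⟨hcT.1, hcT.2.1⟩, hcT.2.2, hcs⟩
  set f : B → B := fun a =>
    if h : ∃ c, c ∈ At₂ ∧ c ≤ a ∧ s ∉ S (cᶜ) then h.choose else ⊥ with hf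
  have hfspec : ∀ a ∈ At₁.filter (fun a => s ∉ S (aᶜ)),
      f a ∈ At₂ ∧ f a ≤ a ∧ s ∉ S ((f a)ᶜ) := by
    intro a ha
    have h := hex a ha
    simp only [hf, dif_pos h]
    exact h.choose_spec
  refine Finset.card_le_card_of_injOn f ?_ ?_
  · intro a ha
    obtain ⟨h1, _, h3⟩ := hfspec a ha
    exact Finset.mem_filter.2 ⟨h1, h3⟩
  · intro a₁ ha₁ a₂ ha₂ heq
    by_contra hne
    obtain ⟨hc1, hle1, _⟩ := hfspec a₁ ha₁
    obtain ⟨hc2, hle2, _⟩ := hfspec a₂ ha₂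
    rw [heq] at hle1
    -- `a₁ ⊓ a₂ = ⊥` since they are distinct atoms of `b₁`
    have ha₁' := Finset.mem_filter.1 (Finset.mem_filter.1 ha₁).1
    have ha₂' := Finset.mem_filter.1 (Finset.mem_filter.1 ha₂).1
    have hmem : a₁ ⊓ a₂ ∈ b₁ := hb1i a₁ ha₁'.1 a₂ ha₂'.1
    have hbot' : a₁ ⊓ a₂ = ⊥ := by
      rcases ha₁'.2.2 _ hmem inf_le_left with h | h
      · exact h
      · rcases ha₂'.2.2 _ hmem inf_le_right with h' | h'
        · exact h'
        · exact absurd (h ▸ h' : a₁ = a₂) hne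
    have : f a₂ ≤ ⊥ := hbot' ▸ le_inf hle1 hle2
    have hfc := (Finset.mem_filter.1 hc2).2.1
    exact hfc (le_bot_iff.1 this)
end
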